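/- arXiv:2605.15278 — 8 statements merged into one kernel-verified Lean document; each statement's English description precedes it below -/
import Mathlib

section
/- For all y ≥ 0, the inverse of the Bennett rate function h(u) = (1+u)log(1+u) − u (restricted to u ≥ 0, where it is strictly increasing) satisfies h⁻¹(y) ≤ √(2y) + y/3. -/
/-- The Bennett rate function. -/
noncomputable def bennettH (u : ℝ) : ℝ := (1 + u) * Real.log (1 + u) - u

private lemma log_ge_div (x : ℝ) (hx : 0 ≤ x) : x / (1 + x) ≤ Real.log (1 + x) := by
  have h1 : (0:ℝ) < 1 + x := by linarith
  have h2 : (0:ℝ) < (1 + x)⁻¹ := by positivity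
  have := Real.log_le_sub_one_of_pos h2
  rw [Real.log_inv] at this
  have h3 : (1+x)⁻¹ = 1 - x/(1+x) := by field_simp; ring
  linarith [h3 ▸ this]

private noncomputable def phiF (s : ℝ) : ℝ := (1 + s/3) * Real.log (1 + s + s^2/6) - s

private lemma quad_pos {s : ℝ} (hs : 0 ≤ s) : (0:ℝ) < 1 + s + s^2/6 := by positivity

private lemma hasDerivAt_quad (s : ℝ) :
    HasDerivAt (fun s : ℝ => 1 + s + s^2/6) (1 + s/3) s := by
  have h1 : HasDerivAt (fun s : ℝ => 1 + s + s^2/6)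
      ((0 + 1) + ((2:ℕ) * s^(2-1))/6) s :=
    ((hasDerivAt_const s 1).add (hasDerivAt_id s)).add ((hasDerivAt_pow 2 s).div_const 6)
  convert h1 using 1
  push_cast; ring

private lemma hasDerivAt_phiF {s : ℝ} (hs : 0 ≤ s) :
    HasDerivAt phiF
      ((1/3) * Real.log (1 + s + s^2/6) + (1 + s/3) * ((1 + s/3)/(1 + s + s^2/6)) - 1) s := by
  have hq := hasDerivAt_quad s
  have hlog : HasDerivAt (fun s : ℝ => Real.log (1 + s + s^2/6))
      ((1 + s/3)/(1 + s + s^2/6)) s := hq.log (quad_pos hs).ne'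
  have ha : HasDerivAt (fun s : ℝ => 1 + s/3) (1/3) s := by
    have := (hasDerivAt_id s).div_const 3
    exact this.const_add 1
  have := (ha.mul hlog).sub (hasDerivAt_id s)
  exact this

private lemma phiF_nonneg {s : ℝ} (hs : 0 ≤ s) : 0 ≤ phiF s := by
  have hmono : MonotoneOn phiF (Set.Ici 0) := by
    apply monotoneOn_of_deriv_nonneg (convex_Ici 0)
    · apply ContinuousOn.sub
      · apply ContinuousOn.mul (by fun_prop)
        apply ContinuousOn.log (by fun_prop)
        intro x hx; exact (quad_pos hx).ne'
      · fun_prop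
    · intro x hx
      rw [interior_Ici] at hx
      exact (hasDerivAt_phiF (le_of_lt hx)).differentiableAt.differentiableWithinAt
    · intro x hx
      rw [interior_Ici] at hx
      have hx0 : (0:ℝ) ≤ x := le_of_lt hx
      rw [(hasDerivAt_phiF hx0).deriv]
      have hlb := log_ge_div (x + x^2/6) (by positivity)
      have hD := quad_pos hx0
      have h1 : 1 + (x + x^2/6) = 1 + x + x^2/6 := by ring
      rw [h1] at hlb
      have key : (x + x^2/6) / (1 + x + x^2/6) / 3 + (1 + x/3) * ((1 + x/3)/(1 + x + x^2/6)) - 1 = 0 := by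
        field_simp
        ring
      nlinarith [hlb, hD]
  have h0 : phiF 0 = 0 := by simp [phiF]
  have := hmono (Set.mem_Ici.mpr le_rfl) (Set.mem_Ici.mpr hs) hs
  linarith [h0 ▸ this]

private lemma hasDerivAt_bennettH {u : ℝ} (hu : -1 < u) :
    HasDerivAt bennettH (Real.log (1 + u)) u := by
  have h1 : HasDerivAt (fun u : ℝ => 1 + u) 1 u := (hasDerivAt_id u).const_add 1
  have hpos : (0:ℝ) < 1 + u := by linarith
  have hlog : HasDerivAt (fun u : ℝ => Real.log (1 + u)) (1/(1+u)) u := by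
    have := h1.log hpos.ne'
    convert this using 1
  have := (h1.mul hlog).sub (hasDerivAt_id u)
  refine this.congr_deriv ?_
  field_simp; ring

private noncomputable def gF (s : ℝ) : ℝ := bennettH (s + s^2/6) - s^2/2

private lemma hasDerivAt_gF {s : ℝ} (hs : 0 ≤ s) : HasDerivAt gF (phiF s) s := by
  have ht : HasDerivAt (fun s : ℝ => s + s^2/6) (1 + s/3) s := by
    have := (hasDerivAt_id s).add ((hasDerivAt_pow 2 s).div_const 6)
    refine this.congr_deriv ?_; push_cast; ring
  have hb := hasDerivAt_bennettH (u := s + s^2/6) (by nlinarith)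
  have hcomp := hb.comp s ht
  have hsq : HasDerivAt (fun s : ℝ => s^2/2) s s := by
    have := (hasDerivAt_pow 2 s).div_const 2
    refine this.congr_deriv ?_; push_cast; ring
  have := hcomp.sub hsq
  refine this.congr_deriv ?_
  simp only [phiF]
  have : 1 + (s + s^2/6) = 1 + s + s^2/6 := by ring
  rw [this]; ring

private lemma gF_nonneg {s : ℝ} (hs : 0 ≤ s) : 0 ≤ gF s := by
  have hmono : MonotoneOn gF (Set.Ici 0) := by
    apply monotoneOn_of_deriv_nonneg (convex_Ici 0)
    · intro x hx
      exact (hasDerivAt_gF hx).differentiableAt.continuousAt.continuousWithinAt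
    · intro x hx
      rw [interior_Ici] at hx
      exact (hasDerivAt_gF (le_of_lt hx)).differentiableAt.differentiableWithinAt
    · intro x hx
      rw [interior_Ici] at hx
      rw [(hasDerivAt_gF (le_of_lt hx)).deriv]
      exact phiF_nonneg (le_of_lt hx)
  have h0 : gF 0 = 0 := by simp [gF, bennettH]
  have := hmono (Set.mem_Ici.mpr le_rfl) (Set.mem_Ici.mpr hs) hs
  linarith [h0 ▸ this]

private lemma bennettH_strictMonoOn : StrictMonoOn bennettH (Set.Ici 0) := by
  apply strictMonoOn_of_deriv_pos (convex_Ici 0)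
  · intro x hx
    exact (hasDerivAt_bennettH (by simp at hx; linarith)).differentiableAt.continuousAt.continuousWithinAt
  · intro x hx
    rw [interior_Ici, Set.mem_Ioi] at hx
    rw [(hasDerivAt_bennettH (by linarith)).deriv]
    exact Real.log_pos (by linarith)

/-- For `y ≥ 0`, the inverse of the Bennett rate function (restricted to `u ≥ 0`,
where it is strictly increasing) satisfies `h⁻¹ y ≤ √(2y) + y/3`: i.e. if `h u = y`
with `u ≥ 0`, then `u ≤ √(2y) + y/3`. -/
theorem bennett_inverse_upper_bound (y u : ℝ) (hy : 0 ≤ y) (hu : 0 ≤ u)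
    (huy : bennettH u = y) :
    u ≤ Real.sqrt (2 * y) + y / 3 := by
  set s := Real.sqrt (2 * y) with hs
  have hs0 : 0 ≤ s := Real.sqrt_nonneg _
  have hs2 : s^2 = 2 * y := Real.sq_sqrt (by linarith)
  have hkey : y ≤ bennettH (s + s^2/6) := by
    have := gF_nonneg hs0
    simp only [gF] at this
    nlinarith
  have hteq : s + s^2/6 = s + y/3 := by rw [hs2]; ring
  rw [hteq] at hkey
  have ht0 : (0:ℝ) ≤ s + y/3 := by linarith
  by_contra hcon
  push_neg at hcon
  have := bennettH_strictMonoOn (Set.mem_Ici.mpr ht0) (Set.mem_Ici.mpr hu) hcon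
  rw [huy] at this
  linarith
end

section
/- For all x ≥ 0, h(x + x²/6) ≥ x²/2, where h(u) = (1+u)log(1+u) − u. -/
/-- Padé-type lower bound for the logarithm: `log (1+u) ≥ (6u+3u²)/(6+6u+u²)` for `u ≥ 0`. -/
lemma log_pade_lower (u : ℝ) (hu : 0 ≤ u) :
    (6 * u + 3 * u ^ 2) / (6 + 6 * u + u ^ 2) ≤ Real.log (1 + u) := by
  set G : ℝ → ℝ := fun t => Real.log (1 + t) - (6 * t + 3 * t ^ 2) / (6 + 6 * t + t ^ 2)
    with hG
  have hden : ∀ t : ℝ, 0 ≤ t → (0 : ℝ) < 6 + 6 * t + t ^ 2 := by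
    intro t ht; positivity
  have hder : ∀ t : ℝ, 0 ≤ t →
      HasDerivAt G (1 / (1 + t) -
        ((6 + 6 * t) * (6 + 6 * t + t ^ 2) - (6 * t + 3 * t ^ 2) * (6 + 2 * t)) /
          (6 + 6 * t + t ^ 2) ^ 2) t := by
    intro t ht
    have h1 : (0 : ℝ) < 1 + t := by linarith
    have hlog : HasDerivAt (fun s : ℝ => Real.log (1 + s)) (1 / (1 + t)) t := by
      have := (HasDerivAt.const_add 1 (hasDerivAt_id t)).log (ne_of_gt h1)
      simpa using this
    have hnum : HasDerivAt (fun s : ℝ => 6 * s + 3 * s ^ 2) (6 + 6 * t) t := by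
      have := ((hasDerivAt_id t).const_mul 6).add ((hasDerivAt_pow 2 t).const_mul 3)
      refine this.congr_deriv ?_; ring
    have hden' : HasDerivAt (fun s : ℝ => 6 + 6 * s + s ^ 2) (6 + 2 * t) t := by
      have := (((hasDerivAt_id t).const_mul 6).const_add 6).add (hasDerivAt_pow 2 t)
      refine this.congr_deriv ?_; ring
    exact hlog.sub (hnum.div hden' (ne_of_gt (hden t ht)))
  have hmono : MonotoneOn G (Set.Ici (0 : ℝ)) := by
    apply monotoneOn_of_deriv_nonneg (convex_Ici 0)
    · intro t ht
      exact (hder t ht).continuousAt.continuousWithinAt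
    · intro t ht
      rw [interior_Ici] at ht
      exact (hder t (le_of_lt ht)).differentiableAt.differentiableWithinAt
    · intro t ht
      rw [interior_Ici] at ht
      have ht' : 0 ≤ t := le_of_lt ht
      rw [(hder t ht').deriv]
      have h1 : (0 : ℝ) < 1 + t := by linarith
      have h2 := hden t ht'
      rw [sub_nonneg, div_le_div_iff₀ (by positivity) h1]
      nlinarith [pow_nonneg ht' 4, sq_nonneg t]
  have h0 : G 0 = 0 := by simp [hG]
  have := hmono (Set.self_mem_Ici) (Set.mem_Ici.mpr hu) hu
  rw [h0] at this
  simpa [hG, sub_nonneg] using this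

/-- For all `x ≥ 0`, `h (x + x²/6) ≥ x²/2`, where `h u = (1+u)·log(1+u) − u`. -/
theorem bennettH_ge_half_sq (x : ℝ) (hx : 0 ≤ x) :
    (1 + (x + x ^ 2 / 6)) * Real.log (1 + (x + x ^ 2 / 6)) - (x + x ^ 2 / 6)
      ≥ x ^ 2 / 2 := by
  set F : ℝ → ℝ := fun t =>
    (1 + (t + t ^ 2 / 6)) * Real.log (1 + (t + t ^ 2 / 6)) - (t + t ^ 2 / 6) - t ^ 2 / 2
    with hF
  have hder : ∀ t : ℝ, 0 ≤ t →
      HasDerivAt F ((1 + t / 3) * Real.log (1 + (t + t ^ 2 / 6)) - t) t := by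
    intro t ht
    have hpos : (0 : ℝ) < 1 + (t + t ^ 2 / 6) := by nlinarith
    have hu : HasDerivAt (fun s : ℝ => s + s ^ 2 / 6) (1 + t / 3) t := by
      have := (hasDerivAt_id t).add ((hasDerivAt_pow 2 t).div_const 6)
      refine this.congr_deriv ?_; ring
    have hu1 : HasDerivAt (fun s : ℝ => 1 + (s + s ^ 2 / 6)) (1 + t / 3) t :=
      hu.const_add 1
    have hlog : HasDerivAt (fun s : ℝ => Real.log (1 + (s + s ^ 2 / 6)))
        ((1 + t / 3) / (1 + (t + t ^ 2 / 6))) t := hu1.log (ne_of_gt hpos)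
    have hmul := hu1.mul hlog
    have hsq : HasDerivAt (fun s : ℝ => s ^ 2 / 2) t t := by
      have := (hasDerivAt_pow 2 t).div_const 2
      refine this.congr_deriv ?_; ring
    have := (hmul.sub hu).sub hsq
    refine this.congr_deriv ?_
    field_simp
    ring
  have hmono : MonotoneOn F (Set.Ici (0 : ℝ)) := by
    apply monotoneOn_of_deriv_nonneg (convex_Ici 0)
    · intro t ht
      exact (hder t ht).continuousAt.continuousWithinAt
    · intro t ht
      rw [interior_Ici] at ht
      exact (hder t (le_of_lt ht)).differentiableAt.differentiableWithinAt
    · intro t ht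
      rw [interior_Ici] at ht
      have ht' : 0 ≤ t := le_of_lt ht
      rw [(hder t ht').deriv]
      have hpade := log_pade_lower (t + t ^ 2 / 6) (by positivity)
      set u : ℝ := t + t ^ 2 / 6 with hu
      have hden : (0 : ℝ) < 6 + 6 * u + u ^ 2 := by positivity
      have hfac : (0 : ℝ) ≤ 1 + t / 3 := by linarith
      have key : t ≤ (1 + t / 3) * ((6 * u + 3 * u ^ 2) / (6 + 6 * u + u ^ 2)) := by
        rw [mul_div_assoc', le_div_iff₀ hden]
        have hu' : u = t + t ^ 2 / 6 := hu
        nlinarith [pow_nonneg ht' 3, pow_nonneg ht' 4]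
      have := mul_le_mul_of_nonneg_left hpade hfac
      linarith
  have h0 : F 0 = 0 := by simp [hF]
  have hF0 := hmono (Set.self_mem_Ici) (Set.mem_Ici.mpr hx) hx
  rw [h0] at hF0
  have : 0 ≤ F x := hF0
  rw [hF] at this
  simp only at this
  linarith
end

section
/- For all x ≥ 0, log(1 + x + x²/6) ≥ 3x/(x+3). -/
lemma exp_mul_le_aux (t : ℝ) (ht : 0 ≤ t) : Real.exp t * (2 - t) ≤ 2 + t := by
  have hf : ∀ s : ℝ, HasDerivAt (fun s => 2 + s - Real.exp s * (2 - s))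
      (1 - Real.exp s * (1 - s)) s := by
    intro s
    have h1 : HasDerivAt (fun s : ℝ => Real.exp s * (2 - s))
        (Real.exp s * (2 - s) + Real.exp s * (-1)) s :=
      (Real.hasDerivAt_exp s).mul ((hasDerivAt_id s).const_sub 2)
    have h2 : HasDerivAt (fun s : ℝ => 2 + s) 1 s :=
      (hasDerivAt_id s).const_add 2
    have : HasDerivAt (fun s => 2 + s - Real.exp s * (2 - s))
        (1 - (Real.exp s * (2 - s) + Real.exp s * (-1))) s := h2.sub h1
    convert this using 1
    ring
  have hmono : Monotone (fun s => 2 + s - Real.exp s * (2 - s)) := by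
    apply monotone_of_deriv_nonneg
    · exact fun s => (hf s).differentiableAt
    · intro s
      rw [(hf s).deriv]
      have h := Real.add_one_le_exp (-s)
      have hpos := Real.exp_pos s
      have hmul : Real.exp s * Real.exp (-s) = 1 := by
        rw [← Real.exp_add]; simp
      nlinarith [mul_le_mul_of_nonneg_left h (le_of_lt hpos)]
  have h0 := hmono ht
  simp at h0
  nlinarith [h0]

/-- For all `x ≥ 0`, `log (1 + x + x²/6) ≥ 3x/(x+3)`. -/
theorem log_ge_ratio (x : ℝ) (hx : 0 ≤ x) :
    Real.log (1 + x + x ^ 2 / 6) ≥ 3 * x / (x + 3) := by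
  have hx3 : (0:ℝ) < x + 3 := by linarith
  have hA : (0:ℝ) < 1 + x + x ^ 2 / 6 := by positivity
  rw [ge_iff_le, Real.le_log_iff_exp_le hA]
  set t := x / (x + 3) with htdef
  have ht0 : 0 ≤ t := div_nonneg hx hx3.le
  have ht1 : t < 1 := by
    rw [htdef, div_lt_one hx3]; linarith
  have h1 : Real.exp t ≤ 3 * (x + 2) / (x + 6) := by
    have h2t : 0 < 2 - t := by linarith
    have := exp_mul_le_aux t ht0
    rw [le_div_iff₀ (by linarith : (0:ℝ) < x + 6)]
    have heq : (2 + t) * (x + 6) = (2 - t) * (3 * (x + 2)) := by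
      rw [htdef]
      field_simp
      ring
    calc Real.exp t * (x + 6) ≤ (2 + t) / (2 - t) * (x + 6) := by
          apply mul_le_mul_of_nonneg_right _ (by linarith)
          rw [le_div_iff₀ h2t]; linarith [exp_mul_le_aux t ht0]
      _ = 3 * (x + 2) := by
          rw [div_mul_eq_mul_div, heq]
          field_simp
  have h3 : 3 * x / (x + 3) = 3 * t := by rw [htdef]; ring
  rw [h3]
  have hexp3 : Real.exp (3 * t) = Real.exp t ^ 3 := by
    rw [← Real.exp_nat_mul]; norm_num
  rw [hexp3]
  have hx6 : (0:ℝ) < x + 6 := by linarith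
  have h4 : Real.exp t ^ 3 ≤ (3 * (x + 2) / (x + 6)) ^ 3 := by
    apply pow_le_pow_left₀ (Real.exp_pos t).le h1
  refine h4.trans ?_
  rw [div_pow, div_le_iff₀ (by positivity)]
  nlinarith [pow_nonneg hx 5, pow_nonneg hx 4, pow_nonneg hx 3, sq_nonneg x]
end

section
/- For independent mean-zero self-adjoint bounded random operators X₁,…,Xₙ on a separable Hilbert space, any convex nonnegative continuous function f : ℝ → ℝ≥0 with f applied via functional calculus, and any θ ∈ ℝ, the real-valued process i ↦ tr(f(θ·Sᵢ)), where Sᵢ = X₁ + ⋯ + Xᵢ, is a nonnegative submartingale with respect to the natural filtration (assuming all traces are finite). -/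
open MeasureTheory Matrix Finset
open scoped Matrix.Norms.L2Operator

noncomputable instance matrixMeasurableSpace {m n : Type*} [Fintype m] [Fintype n] :
    MeasurableSpace (Matrix m n ℂ) := borel _

instance matrixBorelSpace {m n : Type*} [Fintype m] [Fintype n] :
    BorelSpace (Matrix m n ℂ) := ⟨rfl⟩

section MatrixLemmas

variable {d : ℕ}

local notation "M" => Matrix (Fin d) (Fin d) ℂ

private lemma conj_mul_self' (z : ℂ) :
    (starRingEnd ℂ) z * z = ((Complex.normSq z : ℝ) : ℂ) := by
  rw [Complex.normSq_eq_conj_mul_self]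

private lemma quad_eq (U : M) (v : Fin d → ℝ) (u : Fin d → ℂ) :
    star u ⬝ᵥ ((U * diagonal (Complex.ofReal ∘ v) * Uᴴ) *ᵥ u)
      = ∑ k, (v k : ℂ) * ((Complex.normSq ((Uᴴ *ᵥ u) k) : ℝ) : ℂ) := by
  rw [← Matrix.mulVec_mulVec, ← Matrix.mulVec_mulVec, Matrix.dotProduct_mulVec]
  have h : star u ᵥ* U = star (Uᴴ *ᵥ u) := by
    rw [Matrix.star_mulVec, Matrix.conjTranspose_conjTranspose]
  rw [h]
  simp only [dotProduct, Matrix.mulVec_diagonal, Pi.star_apply, Function.comp_apply]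
  congr 1; ext k
  rw [Complex.star_def, mul_comm ((v k : ℂ)) _, ← mul_assoc, conj_mul_self', mul_comm]

private lemma weight_eq (U : M) (hU : U ∈ Matrix.unitaryGroup (Fin d) ℂ) (u : Fin d → ℂ) :
    ∑ k, ((Complex.normSq ((Uᴴ *ᵥ u) k) : ℝ) : ℂ) = star u ⬝ᵥ u := by
  have h : star u ᵥ* U = star (Uᴴ *ᵥ u) := by
    rw [Matrix.star_mulVec, Matrix.conjTranspose_conjTranspose]
  have hUU : U * Uᴴ = 1 := by
    rw [← Matrix.star_eq_conjTranspose]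
    exact (Matrix.mem_unitaryGroup_iff).mp hU
  have h2 : star (Uᴴ *ᵥ u) ⬝ᵥ (Uᴴ *ᵥ u) = star u ⬝ᵥ u := by
    rw [← h, Matrix.dotProduct_mulVec, Matrix.vecMul_vecMul, hUU, Matrix.vecMul_one]
  rw [← h2]
  simp only [dotProduct, Pi.star_apply]
  congr 1; ext k
  rw [Complex.star_def, conj_mul_self']

private lemma re_sum_cast (v w : Fin d → ℝ) :
    (∑ k, (v k : ℂ) * ((w k : ℝ) : ℂ)).re = ∑ k, v k * w k := by
  simp only [← Complex.ofReal_mul, ← Complex.ofReal_sum, Complex.ofReal_re]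

private lemma quad_jensen (f : ℝ → ℝ) (hfconv : ConvexOn ℝ Set.univ f)
    (A : M) (hA : A.IsHermitian) (u : Fin d → ℂ) (hu : star u ⬝ᵥ u = 1) :
    f ((star u ⬝ᵥ (A *ᵥ u)).re) ≤ (star u ⬝ᵥ ((cfc f A) *ᵥ u)).re := by
  set U : M := (hA.eigenvectorUnitary : M) with hUdef
  have hU : U ∈ Matrix.unitaryGroup (Fin d) ℂ := hA.eigenvectorUnitary.2
  set w : Fin d → ℝ := fun k => Complex.normSq ((Uᴴ *ᵥ u) k) with hwdef
  have hw0 : ∀ k, 0 ≤ w k := fun k => Complex.normSq_nonneg _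
  have hw1 : ∑ k, w k = 1 := by
    have h1 : ((∑ k, w k : ℝ) : ℂ) = 1 := by
      rw [Complex.ofReal_sum]; exact (weight_eq U hU u).trans hu
    exact_mod_cast h1
  have hsp : A = U * diagonal (Complex.ofReal ∘ hA.eigenvalues) * Uᴴ := by
    rw [← Matrix.star_eq_conjTranspose]; exact hA.spectral_theorem
  have hAq : (star u ⬝ᵥ (A *ᵥ u)).re = ∑ k, hA.eigenvalues k * w k := by
    have hq := quad_eq U hA.eigenvalues u
    rw [← hsp] at hq
    rw [hq, re_sum_cast]
  have hcfc : cfc f A = U * diagonal (Complex.ofReal ∘ (f ∘ hA.eigenvalues)) * Uᴴ := by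
    rw [hA.cfc_eq, Matrix.IsHermitian.cfc, ← Matrix.star_eq_conjTranspose]
    rfl
  have hCq : (star u ⬝ᵥ ((cfc f A) *ᵥ u)).re = ∑ k, f (hA.eigenvalues k) * w k := by
    have hq := quad_eq U (f ∘ hA.eigenvalues) u
    rw [← hcfc] at hq
    rw [hq, re_sum_cast]
    rfl
  rw [hAq, hCq]
  have hj := hfconv.map_sum_le (t := Finset.univ) (w := w) (p := hA.eigenvalues)
    (fun k _ => hw0 k) hw1 (fun k _ => Set.mem_univ _)
  simp only [smul_eq_mul] at hj
  calc f (∑ k, hA.eigenvalues k * w k) = f (∑ k, w k * hA.eigenvalues k) := by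
        simp only [mul_comm]
    _ ≤ ∑ k, w k * f (hA.eigenvalues k) := hj
    _ = ∑ k, f (hA.eigenvalues k) * w k := by simp only [mul_comm]

private lemma entry_quad (N U : M) (k : Fin d) :
    star (fun i => U i k) ⬝ᵥ (N *ᵥ (fun i => U i k)) = (Uᴴ * N * U) k k := by
  simp only [Matrix.mul_apply, dotProduct, Matrix.mulVec, Matrix.conjTranspose_apply,
    Pi.star_apply, Finset.sum_mul, Finset.mul_sum, dotProduct]
  rw [Finset.sum_comm]
  apply Finset.sum_congr rfl; intro i _
  apply Finset.sum_congr rfl; intro j _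
  ring

private lemma col_unit (U : M) (hU : U ∈ Matrix.unitaryGroup (Fin d) ℂ) (k : Fin d) :
    star (fun i => U i k) ⬝ᵥ (fun i => U i k) = 1 := by
  have h := entry_quad 1 U k
  rw [Matrix.mul_one] at h
  have hUU : Uᴴ * U = 1 := by
    rw [← Matrix.star_eq_conjTranspose]
    exact Matrix.UnitaryGroup.star_mul_self ⟨U, hU⟩
  simpa [hUU, Matrix.one_apply_eq] using h.trans (by rw [hUU, Matrix.one_apply_eq])

private lemma sum_entries_trace (N U : M) (hU : U ∈ Matrix.unitaryGroup (Fin d) ℂ) :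
    ∑ k, (Uᴴ * N * U) k k = Matrix.trace N := by
  have hUU : U * Uᴴ = 1 := by
    rw [← Matrix.star_eq_conjTranspose]
    exact (Matrix.mem_unitaryGroup_iff).mp hU
  have : ∑ k, (Uᴴ * N * U) k k = Matrix.trace (Uᴴ * N * U) := rfl
  rw [this, Matrix.trace_mul_cycle, hUU, Matrix.one_mul]

section G
variable (f : ℝ → ℝ)

/-- The scalar functional `A ↦ re (tr (cfc f A))`. -/
noncomputable def Gfun : M → ℝ := fun A => (Matrix.trace (cfc f A)).re

lemma trace_cfc_herm (A : M) (hA : A.IsHermitian) :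
    Matrix.trace (cfc f A) = ∑ k, (f (hA.eigenvalues k) : ℂ) := by
  rw [hA.cfc_eq, Matrix.IsHermitian.cfc, Unitary.conjStarAlgAut_apply, Matrix.trace_mul_cycle,
    Unitary.coe_star_mul_self, one_mul, Matrix.trace_diagonal]
  rfl

lemma isHerm_iff (A : M) : A.IsHermitian ↔ _root_.IsSelfAdjoint A := by
  rw [Matrix.IsHermitian, _root_.IsSelfAdjoint, Matrix.star_eq_conjTranspose]

lemma isClosed_herm : IsClosed {A : M | A.IsHermitian} :=
  isClosed_eq (continuous_id.matrix_conjTranspose) continuous_id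

lemma herm_convex : Convex ℝ {A : M | A.IsHermitian} := by
  intro a ha b hb t s ht hs hts
  have : _root_.IsSelfAdjoint (t • a + s • b) :=
    ((_root_.IsSelfAdjoint.all t).smul ((isHerm_iff a).mp ha)).add
      ((_root_.IsSelfAdjoint.all s).smul ((isHerm_iff b).mp hb))
  exact (isHerm_iff _).mpr this

lemma smul_herm (θ : ℝ) (A : M) (hA : A.IsHermitian) : (θ • A).IsHermitian :=
  (isHerm_iff _).mpr ((_root_.IsSelfAdjoint.all θ).smul ((isHerm_iff A).mp hA))

lemma Gfun_nonneg (hf0 : ∀ x, 0 ≤ f x) (A : M) (hA : A.IsHermitian) : 0 ≤ Gfun f A := by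
  rw [Gfun, trace_cfc_herm f A hA]
  rw [show (∑ k, ((f (hA.eigenvalues k) : ℝ) : ℂ)) = (((∑ k, f (hA.eigenvalues k) : ℝ)) : ℂ) by
    push_cast; rfl]
  rw [Complex.ofReal_re]
  exact Finset.sum_nonneg fun k _ => hf0 _

lemma convexOn_Gfun (hfconv : ConvexOn ℝ Set.univ f) :
    ConvexOn ℝ {A : M | A.IsHermitian} (Gfun f) := by
  refine ⟨herm_convex, ?_⟩
  intro a ha b hb t s ht hs hts
  replace ha : Matrix.IsHermitian a := ha
  replace hb : Matrix.IsHermitian b := hb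
  have hM : Matrix.IsHermitian (t • a + s • b) :=
    (isHerm_iff _).mpr (((_root_.IsSelfAdjoint.all t).smul ((isHerm_iff a).mp ha)).add
      ((_root_.IsSelfAdjoint.all s).smul ((isHerm_iff b).mp hb)))
  set U : M := (hM.eigenvectorUnitary : M) with hUdef
  have hU : U ∈ Matrix.unitaryGroup (Fin d) ℂ := hM.eigenvectorUnitary.2
  set u : Fin d → (Fin d → ℂ) := fun k => (fun i => U i k) with hudef
  have hdiag : Uᴴ * (t • a + s • b) * U = diagonal (Complex.ofReal ∘ hM.eigenvalues) := by
    rw [← Matrix.star_eq_conjTranspose]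
    have := hM.conjStarAlgAut_star_eigenvectorUnitary
    simp only [Unitary.conjStarAlgAut_apply, Unitary.coe_star, star_star] at this
    exact this
  have hlam : ∀ k, hM.eigenvalues k
      = t * (star (u k) ⬝ᵥ (a *ᵥ u k)).re + s * (star (u k) ⬝ᵥ (b *ᵥ u k)).re := by
    intro k
    have h1 : (Uᴴ * (t • a + s • b) * U) k k = (hM.eigenvalues k : ℂ) := by
      rw [hdiag]; simp [Matrix.diagonal_apply_eq]
    have h2 : Uᴴ * (t • a + s • b) * U = t • (Uᴴ * a * U) + s • (Uᴴ * b * U) := by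
      rw [Matrix.mul_add, Matrix.add_mul]
      congr 1 <;> rw [Matrix.mul_smul, Matrix.smul_mul]
    have h3 := congrArg Complex.re h1
    rw [h2] at h3
    simp only [Matrix.add_apply, Matrix.smul_apply, Complex.add_re, Complex.ofReal_re] at h3
    rw [← h3, entry_quad a U k, entry_quad b U k]
    simp [Complex.real_smul]
  have htr : Gfun f (t • a + s • b) = ∑ k, f (hM.eigenvalues k) := by
    rw [Gfun, trace_cfc_herm f _ hM]
    rw [show (∑ k, ((f (hM.eigenvalues k) : ℝ) : ℂ))
        = (((∑ k, f (hM.eigenvalues k) : ℝ)) : ℂ) by push_cast; rfl]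
    rw [Complex.ofReal_re]
  have hunit : ∀ k, star (u k) ⬝ᵥ u k = 1 := fun k => col_unit U hU k
  have hkey : ∀ k, f (hM.eigenvalues k)
      ≤ t * (star (u k) ⬝ᵥ ((cfc f a) *ᵥ u k)).re + s * (star (u k) ⬝ᵥ ((cfc f b) *ᵥ u k)).re := by
    intro k
    rw [hlam k]
    calc f (t * (star (u k) ⬝ᵥ (a *ᵥ u k)).re + s * (star (u k) ⬝ᵥ (b *ᵥ u k)).re)
        = f (t • (star (u k) ⬝ᵥ (a *ᵥ u k)).re + s • (star (u k) ⬝ᵥ (b *ᵥ u k)).re) := rfl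
      _ ≤ t • f ((star (u k) ⬝ᵥ (a *ᵥ u k)).re) + s • f ((star (u k) ⬝ᵥ (b *ᵥ u k)).re) :=
          hfconv.2 (Set.mem_univ _) (Set.mem_univ _) ht hs hts
      _ ≤ t * (star (u k) ⬝ᵥ ((cfc f a) *ᵥ u k)).re + s * (star (u k) ⬝ᵥ ((cfc f b) *ᵥ u k)).re := by
          have h1 := quad_jensen f hfconv a ha (u k) (hunit k)
          have h2 := quad_jensen f hfconv b hb (u k) (hunit k)
          simp only [smul_eq_mul]
          gcongr
  have hsum : ∀ (N : M), ∑ k, (star (u k) ⬝ᵥ (N *ᵥ u k)).re = (Matrix.trace N).re := by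
    intro N
    have : ∑ k, (star (u k) ⬝ᵥ (N *ᵥ u k)).re = (∑ k, star (u k) ⬝ᵥ (N *ᵥ u k)).re := by
      rw [Complex.re_sum]
    rw [this]
    congr 1
    rw [show (∑ k, star (u k) ⬝ᵥ (N *ᵥ u k)) = ∑ k, (Uᴴ * N * U) k k from
      Finset.sum_congr rfl fun k _ => entry_quad N U k]
    exact sum_entries_trace N U hU
  calc Gfun f (t • a + s • b) = ∑ k, f (hM.eigenvalues k) := htr
    _ ≤ ∑ k, (t * (star (u k) ⬝ᵥ ((cfc f a) *ᵥ u k)).re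
          + s * (star (u k) ⬝ᵥ ((cfc f b) *ᵥ u k)).re) :=
        Finset.sum_le_sum fun k _ => hkey k
    _ = t * Gfun f a + s * Gfun f b := by
        rw [Finset.sum_add_distrib, ← Finset.mul_sum, ← Finset.mul_sum, hsum, hsum]
        rfl

lemma continuousOn_Gfun (hfconv : ConvexOn ℝ Set.univ f) :
    ContinuousOn (Gfun f) {A : M | A.IsHermitian} := by
  have hfc := convexOn_Gfun (d := d) f hfconv
  set p : Submodule ℝ M := selfAdjoint.submodule ℝ M with hp
  haveI : FiniteDimensional ℝ M := by infer_instance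
  have hmem : ∀ x : p, (x : M) ∈ {A : M | A.IsHermitian} := by
    intro x
    have hx : _root_.IsSelfAdjoint (x : M) := x.2
    exact (isHerm_iff _).mpr hx
  have hconv2 : ConvexOn ℝ (Set.univ : Set p) (fun A : p => Gfun f (A : M)) := by
    refine ⟨convex_univ, ?_⟩
    intro a _ b _ t s ht hs hts
    have := hfc.2 (hmem a) (hmem b) ht hs hts
    simpa using this
  have hcont : Continuous (fun A : p => Gfun f (A : M)) := by
    rw [← continuousOn_univ]
    exact hconv2.continuousOn isOpen_univ
  rw [continuousOn_iff_continuous_restrict]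
  have hφ : Continuous (fun x : {A : M | A.IsHermitian} =>
      (⟨x.1, (isHerm_iff x.1).mp x.2⟩ : p)) :=
    Continuous.subtype_mk continuous_subtype_val _
  exact hcont.comp hφ

variable (θ : ℝ)

lemma convexOn_Gsmul (hfconv : ConvexOn ℝ Set.univ f) :
    ConvexOn ℝ {A : M | A.IsHermitian} (fun A => Gfun f (θ • A)) := by
  refine ⟨herm_convex, ?_⟩
  intro a ha b hb t s ht hs hts
  have h := (convexOn_Gfun f hfconv).2 (Set.mem_setOf.mpr (smul_herm θ a ha))
    (Set.mem_setOf.mpr (smul_herm θ b hb)) ht hs hts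
  have hrw : θ • (t • a + s • b) = t • (θ • a) + s • (θ • b) := by
    rw [smul_add, smul_comm θ t a, smul_comm θ s b]
  show Gfun f (θ • (t • a + s • b)) ≤ t • Gfun f (θ • a) + s • Gfun f (θ • b)
  rw [hrw]
  exact h

lemma continuousOn_Gsmul (hfconv : ConvexOn ℝ Set.univ f) :
    ContinuousOn (fun A : M => Gfun f (θ • A)) {A : M | A.IsHermitian} := by
  refine (continuousOn_Gfun f hfconv).comp (continuous_const_smul θ).continuousOn ?_
  intro A hA
  exact smul_herm θ A hA

lemma measurable_Gsmul (hfconv : ConvexOn ℝ Set.univ f) :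
    Measurable (fun A : M => Gfun f (θ • A)) := by
  classical
  have hmG : Measurable (Gfun (d := d) f) := by
    have h0 : Gfun f = Set.piecewise {A : M | A.IsHermitian} (Gfun f) 0 := by
      ext A
      by_cases hA : A.IsHermitian
      · have hmem : A ∈ {A : M | A.IsHermitian} := hA
        simp [Set.piecewise, hmem]
      · have hmem : A ∉ {A : M | A.IsHermitian} := hA
        have hA' : ¬ _root_.IsSelfAdjoint A := fun h => hA ((isHerm_iff A).mpr h)
        simp [Set.piecewise, hmem, Gfun, cfc_apply_of_not_predicate A hA']
    rw [h0]
    exact ContinuousOn.measurable_piecewise (continuousOn_Gfun f hfconv)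
      continuousOn_const (isClosed_herm.measurableSet)
  exact hmG.comp (measurable_const_smul θ)

lemma exists_bound_Gsmul (hfconv : ConvexOn ℝ Set.univ f) (R : ℝ) :
    ∃ B : ℝ, 0 ≤ B ∧ ∀ A : M, A.IsHermitian → ‖A‖ ≤ R → |Gfun f (θ • A)| ≤ B := by
  haveI : FiniteDimensional ℝ M := by infer_instance
  haveI : ProperSpace M := FiniteDimensional.proper ℝ M
  set K : Set M := {A : M | A.IsHermitian} ∩ Metric.closedBall 0 R with hK
  have hKc : IsCompact K :=
    (isCompact_closedBall (0 : M) R).of_isClosed_subset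
      (isClosed_herm.inter Metric.isClosed_closedBall) Set.inter_subset_right
  have hcont : ContinuousOn (fun A : M => Gfun f (θ • A)) K :=
    (continuousOn_Gsmul f θ hfconv).mono Set.inter_subset_left
  obtain ⟨B, hB⟩ := hKc.exists_bound_of_continuousOn hcont
  refine ⟨max B 0, le_max_right _ _, ?_⟩
  intro A hA hAR
  have hAK : A ∈ K := ⟨hA, by simpa [Metric.mem_closedBall, dist_zero_right] using hAR⟩
  calc |Gfun f (θ • A)| = ‖Gfun f (θ • A)‖ := (Real.norm_eq_abs _).symm
    _ ≤ B := hB A hAK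
    _ ≤ max B 0 := le_max_left _ _

end G
end MatrixLemmas

set_option maxHeartbeats 2000000 in
/-- For independent mean-zero self-adjoint bounded random matrices `X₁,…,Xₙ`
(here: random Hermitian complex `d×d` matrices), any convex nonnegative
continuous `f : ℝ → ℝ` applied via the continuous functional calculus, and
any `θ ∈ ℝ`, the process `i ↦ tr f(θ·Sᵢ)` with `Sᵢ = X₁ + ⋯ + Xᵢ` is a
nonnegative submartingale with respect to the natural filtration. -/
theorem trace_convex_submartingale {d n : ℕ} {Ω : Type*} [MeasurableSpace Ω]
    (μ : Measure Ω) [IsProbabilityMeasure μ]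
    (X : Fin n → Ω → Matrix (Fin d) (Fin d) ℂ)
    (hX : ∀ i, MeasureTheory.StronglyMeasurable (X i))
    (hindep : ProbabilityTheory.iIndepFun X μ)
    (hsa : ∀ i ω, (X i ω).IsHermitian)
    (hmean : ∀ i, (∫ ω, X i ω ∂μ) = 0)
    (C : ℝ) (hbd : ∀ i ω, ‖X i ω‖ ≤ C)
    (f : ℝ → ℝ) (hfc : Continuous f) (hfconv : ConvexOn ℝ Set.univ f)
    (hfnonneg : ∀ x, 0 ≤ f x) (θ : ℝ) :
    MeasureTheory.Submartingale
        (fun (i : Fin n) (ω : Ω) =>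
          (Matrix.trace (cfc f (θ • ∑ j ∈ Finset.Iic i, X j ω))).re)
        (MeasureTheory.Filtration.natural X hX) μ ∧
      ∀ (i : Fin n) (ω : Ω),
        0 ≤ (Matrix.trace (cfc f (θ • ∑ j ∈ Finset.Iic i, X j ω))).re := by
  classical
  set ℱ := MeasureTheory.Filtration.natural X hX with hFdef
  have hXm : ∀ i, Measurable (X i) := fun i => (hX i).measurable
  set C' : ℝ := max C 0 with hC'
  have hC'0 : 0 ≤ C' := le_max_right _ _
  have hbd' : ∀ i ω, ‖X i ω‖ ≤ C' := fun i ω => (hbd i ω).trans (le_max_left _ _)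
  set S : Fin n → Ω → Matrix (Fin d) (Fin d) ℂ := fun i ω => ∑ j ∈ Finset.Iic i, X j ω
    with hSdef
  have hSherm : ∀ i ω, (S i ω).IsHermitian := by
    intro i ω
    rw [Matrix.IsHermitian, Matrix.conjTranspose_sum]
    exact Finset.sum_congr rfl fun k _ => hsa k ω
  have hSbound : ∀ i ω, ‖S i ω‖ ≤ n * C' := by
    intro i ω
    calc ‖S i ω‖ ≤ ∑ j ∈ Finset.Iic i, ‖X j ω‖ := norm_sum_le _ _
      _ ≤ ∑ _j ∈ Finset.Iic i, C' := Finset.sum_le_sum fun k _ => hbd' k ω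
      _ = (Finset.Iic i).card * C' := by rw [Finset.sum_const, nsmul_eq_mul]
      _ ≤ n * C' := by
          apply mul_le_mul_of_nonneg_right _ hC'0
          exact_mod_cast (Finset.card_le_univ _).trans_eq (by simp)
  obtain ⟨B, hB0, hB⟩ := exists_bound_Gsmul f θ hfconv (n * C' + n * C')
  have hGmeas : Measurable (fun A : Matrix (Fin d) (Fin d) ℂ => Gfun f (θ • A)) :=
    measurable_Gsmul f θ hfconv
  have hXint : ∀ k, Integrable (X k) μ := by
    intro k
    refine ⟨(hX k).aestronglyMeasurable, ?_⟩
    exact HasFiniteIntegral.of_bounded (C := C') (ae_of_all _ fun ω => hbd' k ω)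
  have hSmeas : ∀ i, Measurable (S i) :=
    fun i => Finset.measurable_sum _ fun k _ => hXm k
  have hSmeasF : ∀ i, Measurable[ℱ i] (S i) := by
    intro i
    apply Finset.measurable_sum
    intro k hk
    have h1 : MeasurableSpace.comap (X k) matrixMeasurableSpace ≤ ℱ i := by
      have he : ℱ i = ⨆ l ≤ i, MeasurableSpace.comap (X l) matrixMeasurableSpace := rfl
      rw [he]
      exact le_biSup (fun l => MeasurableSpace.comap (X l) matrixMeasurableSpace)
        (Finset.mem_Iic.mp hk)
    exact fun t ht => h1 _ ⟨t, ht, rfl⟩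
  have hadp : StronglyAdapted ℱ (fun i ω => Gfun f (θ • S i ω)) := by
    intro i
    exact (hGmeas.comp (hSmeasF i)).stronglyMeasurable
  have habs : ∀ i ω, |Gfun f (θ • S i ω)| ≤ B := by
    intro i ω
    exact hB _ (hSherm i ω) ((hSbound i ω).trans (by linarith [mul_nonneg (Nat.cast_nonneg (α := ℝ) n) hC'0]))
  have hint : ∀ i, Integrable (fun ω => Gfun f (θ • S i ω)) μ := by
    intro i
    refine Integrable.mono' (integrable_const B) ((hGmeas.comp (hSmeas i)).aestronglyMeasurable) ?_
    exact ae_of_all _ fun ω => by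
      rw [Real.norm_eq_abs]; exact habs i ω
  have hnn : ∀ (i : Fin n) (ω : Ω), 0 ≤ Gfun f (θ • S i ω) :=
    fun i ω => Gfun_nonneg f hfnonneg _ (smul_herm θ _ (hSherm i ω))
  refine ⟨MeasureTheory.submartingale_of_setIntegral_le hadp hint ?_, hnn⟩
  intro i j hij s hs
  have hsmeas : MeasurableSet s := ℱ.le i s hs
  -- the increment
  set T : Finset (Fin n) := Finset.Iic j \ Finset.Iic i with hT
  set Y : Ω → Matrix (Fin d) (Fin d) ℂ := fun ω => ∑ k ∈ T, X k ω with hY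
  have hYmeas : Measurable Y := Finset.measurable_sum _ fun k _ => hXm k
  have hYherm : ∀ ω, (Y ω).IsHermitian := by
    intro ω
    rw [Matrix.IsHermitian, Matrix.conjTranspose_sum]
    exact Finset.sum_congr rfl fun k _ => hsa k ω
  have hYbd : ∀ ω, ‖Y ω‖ ≤ n * C' := by
    intro ω
    calc ‖Y ω‖ ≤ ∑ k ∈ T, ‖X k ω‖ := norm_sum_le _ _
      _ ≤ ∑ _k ∈ T, C' := Finset.sum_le_sum fun k _ => hbd' k ω
      _ = T.card * C' := by rw [Finset.sum_const, nsmul_eq_mul]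
      _ ≤ n * C' := by
          apply mul_le_mul_of_nonneg_right _ hC'0
          exact_mod_cast (Finset.card_le_univ _).trans_eq (by simp)
  have hsplit : ∀ ω, S j ω = S i ω + Y ω := by
    intro ω
    rw [hY, hSdef]
    rw [add_comm]
    exact (Finset.sum_sdiff (Finset.Iic_subset_Iic.mpr hij)).symm
  have hYint : Integrable Y μ := integrable_finset_sum _ fun k _ => hXint k
  have hYzero : ∫ ω, Y ω ∂μ = 0 := by
    rw [hY, integral_finset_sum _ fun k _ => hXint k]
    simp [hmean]
  -- independence
  have hYmeas₂ : Measurable[⨆ k ∈ ((T : Finset (Fin n)) : Set (Fin n)),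
      MeasurableSpace.comap (X k) matrixMeasurableSpace] Y := by
    apply Finset.measurable_sum
    intro k hk
    have h1 : MeasurableSpace.comap (X k) matrixMeasurableSpace
        ≤ ⨆ k ∈ ((T : Finset (Fin n)) : Set (Fin n)),
            MeasurableSpace.comap (X k) matrixMeasurableSpace :=
      le_biSup (fun k => MeasurableSpace.comap (X k) matrixMeasurableSpace)
        (Finset.mem_coe.mpr hk)
    exact fun t ht => h1 _ ⟨t, ht, rfl⟩
  have hsep : ProbabilityTheory.Indep (ℱ i)
      (⨆ k ∈ ((T : Finset (Fin n)) : Set (Fin n)),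
        MeasurableSpace.comap (X k) matrixMeasurableSpace) μ := by
    have h_indep : ProbabilityTheory.iIndep
        (fun k => MeasurableSpace.comap (X k) matrixMeasurableSpace) μ := hindep
    have h_le : ∀ k, MeasurableSpace.comap (X k) matrixMeasurableSpace ≤ _ :=
      fun k => (hX k).measurable.comap_le
    have hdisj : Disjoint {k : Fin n | k ≤ i} ((T : Finset (Fin n)) : Set (Fin n)) := by
      rw [Set.disjoint_left]
      intro k hk hk2
      rw [hT] at hk2
      simp only [Finset.coe_sdiff, Set.mem_diff, Finset.coe_Iic, Set.mem_Iic] at hk2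
      exact hk2.2 hk
    have h := ProbabilityTheory.indep_iSup_of_disjoint h_le h_indep hdisj
    refine ProbabilityTheory.indep_of_indep_of_le_left h ?_
    have he : ℱ i = ⨆ l ≤ i, MeasurableSpace.comap (X l) matrixMeasurableSpace := rfl
    rw [he]
    exact le_rfl
  set Z : Ω → (Matrix (Fin d) (Fin d) ℂ) × ℝ :=
    fun ω => (S i ω, Set.indicator s (fun _ => (1 : ℝ)) ω) with hZ
  have hZmeasF : Measurable[ℱ i] Z :=
    (hSmeasF i).prodMk ((measurable_const).indicator hs)
  have hZmeas : Measurable Z := hZmeasF.mono (ℱ.le i) le_rfl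
  have hIndepZY : ProbabilityTheory.IndepFun Z Y μ := by
    have h1 := ProbabilityTheory.indep_of_indep_of_le_left hsep hZmeasF.comap_le
    exact ProbabilityTheory.indep_of_indep_of_le_right h1 hYmeas₂.comap_le
  have hmap : μ.map (fun ω => (Z ω, Y ω)) = (μ.map Z).prod (μ.map Y) :=
    (ProbabilityTheory.indepFun_iff_map_prod_eq_prod_map_map hZmeas.aemeasurable
      hYmeas.aemeasurable).mp hIndepZY
  set F : ((Matrix (Fin d) (Fin d) ℂ) × ℝ) × (Matrix (Fin d) (Fin d) ℂ) → ℝ :=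
    fun q => q.1.2 * Gfun f (θ • (q.1.1 + q.2)) with hF
  have hFmeas : Measurable F := by
    apply Measurable.mul
    · exact measurable_snd.comp measurable_fst
    · exact hGmeas.comp ((measurable_fst.comp measurable_fst).add measurable_snd)
  have hFbd : ∀ ω ω', |F (Z ω, Y ω')| ≤ B := by
    intro ω ω'
    have h1 : |Set.indicator s (fun _ => (1 : ℝ)) ω| ≤ 1 := by
      by_cases hω : ω ∈ s <;> simp [Set.indicator_of_mem, Set.indicator_of_notMem, hω]
    have h2 : |Gfun f (θ • (S i ω + Y ω'))| ≤ B := by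
      apply hB
      · rw [Matrix.IsHermitian, Matrix.conjTranspose_add, (hSherm i ω), (hYherm ω')]
      · calc ‖S i ω + Y ω'‖ ≤ ‖S i ω‖ + ‖Y ω'‖ := norm_add_le _ _
          _ ≤ n * C' + n * C' := add_le_add (hSbound i ω) (hYbd ω')
    calc |F (Z ω, Y ω')| = |Set.indicator s (fun _ => (1 : ℝ)) ω| * |Gfun f (θ • (S i ω + Y ω'))| := by
          rw [hF]; exact abs_mul _ _
      _ ≤ 1 * B := mul_le_mul h1 h2 (abs_nonneg _) zero_le_one
      _ = B := one_mul B
  have hprodmap : (μ.map Z).prod (μ.map Y) = (μ.prod μ).map (Prod.map Z Y) :=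
    Measure.map_prod_map μ μ hZmeas hYmeas
  have hFint : Integrable F ((μ.map Z).prod (μ.map Y)) := by
    rw [hprodmap, integrable_map_measure hFmeas.aestronglyMeasurable
      (hZmeas.prodMap hYmeas).aemeasurable]
    refine Integrable.mono' (integrable_const B)
      ((hFmeas.comp (hZmeas.prodMap hYmeas)).aestronglyMeasurable) ?_
    exact ae_of_all _ fun p => by
      rw [Real.norm_eq_abs]; exact hFbd p.1 p.2
  -- identify the two set integrals through the product measure
  have hAeq : ∫ ω in s, Gfun f (θ • S j ω) ∂μ = ∫ q, F q ∂((μ.map Z).prod (μ.map Y)) := by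
    rw [← hmap, integral_map (hZmeas.prodMk hYmeas).aemeasurable hFmeas.aestronglyMeasurable]
    rw [← integral_indicator hsmeas]
    congr 1
    ext ω
    by_cases hω : ω ∈ s
    · rw [Set.indicator_of_mem hω, hF]
      simp only [hZ]
      rw [Set.indicator_of_mem hω, one_mul, ← hsplit ω]
    · rw [Set.indicator_of_notMem hω, hF]
      simp only [hZ]
      rw [Set.indicator_of_notMem hω, zero_mul]
  have hBeq : ∫ ω in s, Gfun f (θ • S i ω) ∂μ
      = ∫ z, z.2 * Gfun f (θ • z.1) ∂(μ.map Z) := by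
    have hg2 : Measurable fun z : (Matrix (Fin d) (Fin d) ℂ) × ℝ => z.2 * Gfun f (θ • z.1) :=
      measurable_snd.mul (hGmeas.comp measurable_fst)
    rw [integral_map hZmeas.aemeasurable hg2.aestronglyMeasurable]
    rw [← integral_indicator hsmeas]
    congr 1
    ext ω
    by_cases hω : ω ∈ s
    · simp only [hZ]
      rw [Set.indicator_of_mem hω, Set.indicator_of_mem hω, one_mul]
    · simp only [hZ]
      rw [Set.indicator_of_notMem hω, Set.indicator_of_notMem hω, zero_mul]
  -- Jensen for the inner integral
  have hinner : ∀ᵐ z ∂(μ.map Z), z.2 * Gfun f (θ • z.1) ≤ ∫ y, F (z, y) ∂(μ.map Y) := by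
    have hset : MeasurableSet {z : (Matrix (Fin d) (Fin d) ℂ) × ℝ |
        (z.1.IsHermitian ∧ ‖z.1‖ ≤ n * C') ∧ 0 ≤ z.2} := by
      refine MeasurableSet.inter (MeasurableSet.inter ?_ ?_) ?_
      · exact (isClosed_herm.preimage continuous_fst).measurableSet
      · exact measurableSet_le (continuous_norm.comp continuous_fst).measurable
          measurable_const
      · exact measurableSet_le measurable_const measurable_snd
    have hzae : ∀ᵐ z ∂(μ.map Z), (z.1.IsHermitian ∧ ‖z.1‖ ≤ n * C') ∧ 0 ≤ z.2 := by
      rw [ae_map_iff hZmeas.aemeasurable hset]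
      refine ae_of_all _ fun ω => ⟨⟨hSherm i ω, hSbound i ω⟩, ?_⟩
      by_cases hω : ω ∈ s <;>
        simp [hZ, Set.indicator_of_mem, Set.indicator_of_notMem, hω]
    filter_upwards [hzae] with z hz
    obtain ⟨⟨hzherm, hznorm⟩, hznn⟩ := hz
    have hmeaszy : Measurable (fun y : Matrix (Fin d) (Fin d) ℂ => F (z, y)) :=
      hFmeas.comp measurable_prodMk_left
    rw [integral_map hYmeas.aemeasurable hmeaszy.aestronglyMeasurable]
    have heval : (fun ω' => F (z, Y ω')) = fun ω' => z.2 * Gfun f (θ • (z.1 + Y ω')) := rfl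
    rw [heval, integral_const_mul]
    apply mul_le_mul_of_nonneg_left _ hznn
    -- Jensen
    have hconv : ConvexOn ℝ {A : Matrix (Fin d) (Fin d) ℂ | A.IsHermitian}
        (fun A => Gfun f (θ • A)) := convexOn_Gsmul f θ hfconv
    have hmean2 : ∫ ω', (z.1 + Y ω') ∂μ = z.1 := by
      rw [integral_add (integrable_const _) hYint, hYzero, add_zero, integral_const]
      simp
    have hintf : Integrable (fun ω' => z.1 + Y ω') μ :=
      (integrable_const _).add hYint
    have hintgf : Integrable ((fun A => Gfun f (θ • A)) ∘ (fun ω' => z.1 + Y ω')) μ := by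
      refine Integrable.mono' (integrable_const B)
        ((hGmeas.comp (measurable_const.add hYmeas)).aestronglyMeasurable) ?_
      refine ae_of_all _ fun ω' => ?_
      rw [Real.norm_eq_abs]
      apply hB
      · rw [Matrix.IsHermitian, Matrix.conjTranspose_add, hzherm, hYherm ω']
      · calc ‖z.1 + Y ω'‖ ≤ ‖z.1‖ + ‖Y ω'‖ := norm_add_le _ _
          _ ≤ n * C' + n * C' := add_le_add hznorm (hYbd ω')
    have hj := hconv.map_integral_le (continuousOn_Gsmul f θ hfconv) isClosed_herm
      (ae_of_all _ fun ω' => by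
        show (z.1 + Y ω').IsHermitian
        rw [Matrix.IsHermitian, Matrix.conjTranspose_add, hzherm, hYherm ω'])
      hintf hintgf
    rw [hmean2] at hj
    exact hj
  -- outer integral comparison
  have houter : ∫ z, z.2 * Gfun f (θ • z.1) ∂(μ.map Z)
      ≤ ∫ z, (∫ y, F (z, y) ∂(μ.map Y)) ∂(μ.map Z) := by
    refine integral_mono_ae ?_ ?_ hinner
    · have hg2 : Measurable fun z : (Matrix (Fin d) (Fin d) ℂ) × ℝ => z.2 * Gfun f (θ • z.1) :=
        measurable_snd.mul (hGmeas.comp measurable_fst)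
      rw [integrable_map_measure hg2.aestronglyMeasurable hZmeas.aemeasurable]
      refine Integrable.mono' (integrable_const B)
        ((hg2.comp hZmeas).aestronglyMeasurable) ?_
      refine ae_of_all _ fun ω => ?_
      rw [Real.norm_eq_abs]
      have h1 : |Set.indicator s (fun _ => (1 : ℝ)) ω| ≤ 1 := by
        by_cases hω : ω ∈ s <;> simp [Set.indicator_of_mem, Set.indicator_of_notMem, hω]
      calc |Set.indicator s (fun _ => (1:ℝ)) ω * Gfun f (θ • S i ω)|
          = |Set.indicator s (fun _ => (1:ℝ)) ω| * |Gfun f (θ • S i ω)| := abs_mul _ _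
        _ ≤ 1 * B := mul_le_mul h1 (habs i ω) (abs_nonneg _) zero_le_one
        _ = B := one_mul B
    · exact hFint.integral_prod_left
  calc ∫ ω in s, Gfun f (θ • S i ω) ∂μ
      = ∫ z, z.2 * Gfun f (θ • z.1) ∂(μ.map Z) := hBeq
    _ ≤ ∫ z, (∫ y, F (z, y) ∂(μ.map Y)) ∂(μ.map Z) := houter
    _ = ∫ q, F q ∂((μ.map Z).prod (μ.map Y)) := (integral_prod F hFint).symm
    _ = ∫ ω in s, Gfun f (θ • S j ω) ∂μ := hAeq.symm
end

section
/- Let X be a random self-adjoint matrix with E X = 0 and ‖X‖ ≤ c almost surely (operator norm). Then for every θ ∈ ℝ, E exp(θX) ⪯ exp(ψ(|θ|)·E X²), where ψ(θ) = (e^{θc} − θc − 1)/c² and ⪯ is the Loewner order. -/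
open Matrix MeasureTheory Nat
open scoped Matrix.Norms.L2Operator






lemma exp_expand (w : ℝ) :
    Real.exp w = 1 + w + ∑' n : ℕ, w ^ (n + 2) / (n + 2)! := by
  have hs : Summable (fun n : ℕ => w ^ n / n !) := Real.summable_pow_div_factorial w
  have hs1 : Summable (fun n : ℕ => w ^ (n + 1) / (n + 1)!) := (summable_nat_add_iff 1).mpr hs
  rw [Real.exp_eq_exp_ℝ]
  rw [congrFun (NormedSpace.exp_eq_tsum_div) w]
  rw [Summable.tsum_eq_zero_add hs, Summable.tsum_eq_zero_add hs1]
  norm_num [add_assoc]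

lemma scalar_key {c : ℝ} (hc : 0 < c) (θ lam : ℝ) (hlam : |lam| ≤ c) :
    Real.exp (θ * lam) ≤
      1 + θ * lam + (Real.exp (|θ| * c) - |θ| * c - 1) / c ^ 2 * lam ^ 2 := by
  have hz : Real.exp (|θ| * c) - |θ| * c - 1 = ∑' n : ℕ, (|θ| * c) ^ (n + 2) / (n + 2)! := by
    rw [exp_expand (|θ| * c)]; ring
  have hsum1 : Summable (fun n : ℕ => (θ * lam) ^ (n + 2) / (n + 2)!) :=
    (summable_nat_add_iff 2).mpr (Real.summable_pow_div_factorial _)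
  have hsum2 : Summable (fun n : ℕ => lam ^ 2 / c ^ 2 * ((|θ| * c) ^ (n + 2) / (n + 2)!)) :=
    ((summable_nat_add_iff 2).mpr (Real.summable_pow_div_factorial _)).mul_left _
  have key : (∑' n : ℕ, (θ * lam) ^ (n + 2) / (n + 2)!) ≤
      ∑' n : ℕ, lam ^ 2 / c ^ 2 * ((|θ| * c) ^ (n + 2) / (n + 2)!) := by
    refine Summable.tsum_le_tsum (fun n => ?_) hsum1 hsum2
    have habs : |lam| ^ (n + 2) ≤ lam ^ 2 * c ^ n := by
      have h0 : |lam| ^ (n + 2) = |lam| ^ 2 * |lam| ^ n := by ring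
      rw [h0, sq_abs]
      exact mul_le_mul_of_nonneg_left (pow_le_pow_left₀ (abs_nonneg _) hlam n) (sq_nonneg _)
    have h1 : (θ * lam) ^ (n + 2) ≤ |θ| ^ (n + 2) * (lam ^ 2 * c ^ n) := by
      calc (θ * lam) ^ (n + 2) ≤ |(θ * lam) ^ (n + 2)| := le_abs_self _
        _ = |θ| ^ (n + 2) * |lam| ^ (n + 2) := by rw [abs_pow, abs_mul, mul_pow]
        _ ≤ |θ| ^ (n + 2) * (lam ^ 2 * c ^ n) :=
            mul_le_mul_of_nonneg_left habs (pow_nonneg (abs_nonneg _) _)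
    have h2 : lam ^ 2 / c ^ 2 * ((|θ| * c) ^ (n + 2) / (n + 2)!) =
        |θ| ^ (n + 2) * (lam ^ 2 * c ^ n) / (n + 2)! := by
      rw [mul_pow, pow_add]
      field_simp
      ring
    rw [h2]
    gcongr
  calc Real.exp (θ * lam) = 1 + θ * lam + ∑' n : ℕ, (θ * lam) ^ (n + 2) / (n + 2)! :=
        exp_expand _
    _ ≤ 1 + θ * lam + ∑' n : ℕ, lam ^ 2 / c ^ 2 * ((|θ| * c) ^ (n + 2) / (n + 2)!) := by
        linarith
    _ = 1 + θ * lam + (Real.exp (|θ| * c) - |θ| * c - 1) / c ^ 2 * lam ^ 2 := by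
        rw [tsum_mul_left, ← hz]; ring





lemma norm_one_le_matrix (d : ℕ) : ‖(1 : Matrix (Fin d) (Fin d) ℝ)‖ ≤ 1 := by
  rw [Matrix.cstar_norm_def, _root_.map_one]
  exact ContinuousLinearMap.norm_id_le

lemma norm_exp_le_matrix {d : ℕ} (M : Matrix (Fin d) (Fin d) ℝ) :
    ‖NormedSpace.exp M‖ ≤ Real.exp ‖M‖ := by
  rw [NormedSpace.exp_eq_tsum (𝕂 := ℝ)]
  have hsum : Summable fun n : ℕ => ‖(n !⁻¹ : ℝ) • M ^ n‖ := by
    have := NormedSpace.norm_expSeries_summable (𝕂 := ℝ) M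
    simpa only [NormedSpace.expSeries_apply_eq] using this
  have hsum2 : Summable fun n : ℕ => ‖M‖ ^ n / n ! := Real.summable_pow_div_factorial _
  refine (norm_tsum_le_tsum_norm hsum).trans ?_
  have h : Real.exp ‖M‖ = ∑' n : ℕ, ‖M‖ ^ n / n ! := by
    rw [Real.exp_eq_exp_ℝ, congrFun (NormedSpace.exp_eq_tsum_div) _]
  rw [h]
  refine Summable.tsum_le_tsum (fun n => ?_) hsum hsum2
  rw [norm_smul]
  cases n with
  | zero => simpa using norm_one_le_matrix d
  | succ k =>
    have h1 : ‖M ^ (k + 1)‖ ≤ ‖M‖ ^ (k + 1) := norm_pow_le' M (Nat.succ_pos k)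
    have h2 : ‖((k + 1)!⁻¹ : ℝ)‖ = ((k + 1)! : ℝ)⁻¹ := by
      rw [Real.norm_eq_abs, abs_of_nonneg (by positivity)]
    rw [h2, div_eq_inv_mul]
    exact mul_le_mul_of_nonneg_left h1 (by positivity)

lemma eig_abs_le {d : ℕ} {A : Matrix (Fin d) (Fin d) ℝ} (hA : A.IsHermitian) (i : Fin d) :
    |hA.eigenvalues i| ≤ ‖A‖ := by
  have hv : ‖hA.eigenvectorBasis i‖ = 1 := hA.eigenvectorBasis.orthonormal.1 i
  have h := A.l2_opNorm_mulVec (hA.eigenvectorBasis i)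
  have e1 : (EuclideanSpace.equiv (Fin d) ℝ).symm (A *ᵥ hA.eigenvectorBasis i) =
      hA.eigenvalues i • hA.eigenvectorBasis i := by
    apply PiLp.ext
    intro j
    exact congrFun (hA.mulVec_eigenvectorBasis i) j
  rw [e1, norm_smul, Real.norm_eq_abs, hv] at h
  simpa using h





section Spectral

variable {d : ℕ} {A : Matrix (Fin d) (Fin d) ℝ}

lemma psd_of_conj (V : Matrix (Fin d) (Fin d) ℝ) (g : Fin d → ℝ) (hg : ∀ i, 0 ≤ g i) :
    (V * Matrix.diagonal g * star V).PosSemidef := by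
  rw [Matrix.star_eq_conjTranspose]
  exact (Matrix.posSemidef_diagonal_iff.mpr hg).mul_mul_conjTranspose_same V

lemma spectral_real (hA : A.IsHermitian) :
    A = (hA.eigenvectorUnitary : Matrix (Fin d) (Fin d) ℝ) * Matrix.diagonal hA.eigenvalues *
      star (hA.eigenvectorUnitary : Matrix (Fin d) (Fin d) ℝ) := by
  have := hA.spectral_theorem
  simpa [RCLike.ofReal_real_eq_id, Function.comp] using this

lemma smul_rep (hA : A.IsHermitian) (t : ℝ) :
    t • A = (hA.eigenvectorUnitary : Matrix (Fin d) (Fin d) ℝ) *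
      Matrix.diagonal (fun i => t * hA.eigenvalues i) *
      star (hA.eigenvectorUnitary : Matrix (Fin d) (Fin d) ℝ) := by
  have h : Matrix.diagonal (fun i => t * hA.eigenvalues i) =
      t • Matrix.diagonal hA.eigenvalues := by
    rw [← Matrix.diagonal_smul]
    rfl
  rw [h, mul_smul_comm, smul_mul_assoc, ← spectral_real hA]

lemma sq_rep (hA : A.IsHermitian) :
    A ^ 2 = (hA.eigenvectorUnitary : Matrix (Fin d) (Fin d) ℝ) *
      Matrix.diagonal (fun i => hA.eigenvalues i ^ 2) *
      star (hA.eigenvectorUnitary : Matrix (Fin d) (Fin d) ℝ) := by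
  set V : Matrix (Fin d) (Fin d) ℝ := (hA.eigenvectorUnitary : Matrix (Fin d) (Fin d) ℝ) with hVdef
  have hV2 : star V * V = 1 := Matrix.mem_unitaryGroup_iff'.mp (hA.eigenvectorUnitary).2
  conv_lhs => rw [pow_two, spectral_real hA]
  calc (V * Matrix.diagonal hA.eigenvalues * star V) *
        (V * Matrix.diagonal hA.eigenvalues * star V)
      = V * (Matrix.diagonal hA.eigenvalues * (star V * V) * Matrix.diagonal hA.eigenvalues) *
        star V := by noncomm_ring
    _ = V * Matrix.diagonal (fun i => hA.eigenvalues i ^ 2) * star V := by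
        rw [hV2, mul_one, Matrix.diagonal_mul_diagonal]
        congr 1
        ext i
        ring

lemma one_rep (hA : A.IsHermitian) :
    (1 : Matrix (Fin d) (Fin d) ℝ) = (hA.eigenvectorUnitary : Matrix (Fin d) (Fin d) ℝ) *
      Matrix.diagonal (fun _ => (1 : ℝ)) *
      star (hA.eigenvectorUnitary : Matrix (Fin d) (Fin d) ℝ) := by
  have hV1 : (hA.eigenvectorUnitary : Matrix (Fin d) (Fin d) ℝ) *
      star (hA.eigenvectorUnitary : Matrix (Fin d) (Fin d) ℝ) = 1 :=
    Matrix.mem_unitaryGroup_iff.mp (hA.eigenvectorUnitary).2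
  rw [show Matrix.diagonal (fun _ : Fin d => (1 : ℝ)) = 1 from Matrix.diagonal_one, mul_one, hV1]

lemma exp_rep (hA : A.IsHermitian) (t : ℝ) :
    NormedSpace.exp (t • A) = (hA.eigenvectorUnitary : Matrix (Fin d) (Fin d) ℝ) *
      Matrix.diagonal (fun i => Real.exp (t * hA.eigenvalues i)) *
      star (hA.eigenvectorUnitary : Matrix (Fin d) (Fin d) ℝ) := by
  set V : Matrix (Fin d) (Fin d) ℝ := (hA.eigenvectorUnitary : Matrix (Fin d) (Fin d) ℝ) with hVdef
  have hV1 : V * star V = 1 := Matrix.mem_unitaryGroup_iff.mp (hA.eigenvectorUnitary).2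
  have hV2 : star V * V = 1 := Matrix.mem_unitaryGroup_iff'.mp (hA.eigenvectorUnitary).2
  have hVinv : V⁻¹ = star V := Matrix.inv_eq_left_inv hV2
  have hVunit : IsUnit V := ⟨⟨V, star V, hV1, hV2⟩, rfl⟩
  rw [smul_rep hA t, ← hVinv, Matrix.exp_conj V _ hVunit, Matrix.exp_diagonal, hVinv]
  congr 1
  congr 1
  rw [Pi.exp_def]
  funext i
  rw [Real.exp_eq_exp_ℝ]


lemma smul_sq_rep (hA : A.IsHermitian) (t : ℝ) :
    t • A ^ 2 = (hA.eigenvectorUnitary : Matrix (Fin d) (Fin d) ℝ) *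
      Matrix.diagonal (fun i => t * hA.eigenvalues i ^ 2) *
      star (hA.eigenvectorUnitary : Matrix (Fin d) (Fin d) ℝ) := by
  have h : Matrix.diagonal (fun i => t * hA.eigenvalues i ^ 2) =
      t • Matrix.diagonal (fun i => hA.eigenvalues i ^ 2) := by
    rw [← Matrix.diagonal_smul]
    rfl
  rw [h, mul_smul_comm, smul_mul_assoc, ← sq_rep hA]

lemma key_psd (hA : A.IsHermitian) (θ ψ : ℝ)
    (h : ∀ i, Real.exp (θ * hA.eigenvalues i) ≤
      1 + θ * hA.eigenvalues i + ψ * hA.eigenvalues i ^ 2) :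
    ((1 : Matrix (Fin d) (Fin d) ℝ) + θ • A + ψ • A ^ 2
      - NormedSpace.exp (θ • A)).PosSemidef := by
  rw [exp_rep hA θ, one_rep hA, smul_rep hA θ, smul_sq_rep hA ψ]
  set V : Matrix (Fin d) (Fin d) ℝ := (hA.eigenvectorUnitary : Matrix (Fin d) (Fin d) ℝ)
  have e : V * Matrix.diagonal (fun _ : Fin d => (1:ℝ)) * star V +
      V * Matrix.diagonal (fun i => θ * hA.eigenvalues i) * star V +
      V * Matrix.diagonal (fun i => ψ * hA.eigenvalues i ^ 2) * star V -
      V * Matrix.diagonal (fun i => Real.exp (θ * hA.eigenvalues i)) * star V =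
      V * Matrix.diagonal (fun i => 1 + θ * hA.eigenvalues i + ψ * hA.eigenvalues i ^ 2
        - Real.exp (θ * hA.eigenvalues i)) * star V := by
    have e1 : Matrix.diagonal (fun i => 1 + θ * hA.eigenvalues i + ψ * hA.eigenvalues i ^ 2
        - Real.exp (θ * hA.eigenvalues i)) =
        Matrix.diagonal (fun _ : Fin d => (1:ℝ)) +
        Matrix.diagonal (fun i => θ * hA.eigenvalues i) +
        Matrix.diagonal (fun i => ψ * hA.eigenvalues i ^ 2) -
        Matrix.diagonal (fun i => Real.exp (θ * hA.eigenvalues i)) := by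
      rw [Matrix.diagonal_add, Matrix.diagonal_add, Matrix.diagonal_sub]
    rw [e1]
    noncomm_ring
  rw [e]
  exact psd_of_conj V _ (fun i => by have := h i; linarith)

lemma exp_lower_psd {B : Matrix (Fin d) (Fin d) ℝ} (hB : B.IsHermitian) (t : ℝ) :
    (NormedSpace.exp (t • B) - 1 - t • B).PosSemidef := by
  rw [exp_rep hB t, one_rep hB, smul_rep hB t]
  set V : Matrix (Fin d) (Fin d) ℝ := (hB.eigenvectorUnitary : Matrix (Fin d) (Fin d) ℝ)
  have e : V * Matrix.diagonal (fun i => Real.exp (t * hB.eigenvalues i)) * star V -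
      V * Matrix.diagonal (fun _ : Fin d => (1:ℝ)) * star V -
      V * Matrix.diagonal (fun i => t * hB.eigenvalues i) * star V =
      V * Matrix.diagonal (fun i => Real.exp (t * hB.eigenvalues i) - 1 - t * hB.eigenvalues i) *
        star V := by
    have e1 : Matrix.diagonal (fun i => Real.exp (t * hB.eigenvalues i) - 1 - t * hB.eigenvalues i) =
        Matrix.diagonal (fun i => Real.exp (t * hB.eigenvalues i)) -
        Matrix.diagonal (fun _ : Fin d => (1:ℝ)) -
        Matrix.diagonal (fun i => t * hB.eigenvalues i) := by
      rw [Matrix.diagonal_sub, Matrix.diagonal_sub]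
    rw [e1]
    noncomm_ring
  rw [e]
  refine psd_of_conj V _ (fun i => ?_)
  have := Real.add_one_le_exp (t * hB.eigenvalues i)
  linarith

end Spectral





noncomputable def ctCLM (d : ℕ) : Matrix (Fin d) (Fin d) ℝ →L[ℝ] Matrix (Fin d) (Fin d) ℝ :=
  LinearMap.toContinuousLinearMap
    { toFun := fun M => Mᴴ
      map_add' := fun M N => Matrix.conjTranspose_add M N
      map_smul' := fun r M => by
        simp [Matrix.conjTranspose_smul] }

noncomputable def quadCLM {d : ℕ} (x : Fin d → ℝ) : Matrix (Fin d) (Fin d) ℝ →L[ℝ] ℝ :=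
  LinearMap.toContinuousLinearMap
    { toFun := fun M => dotProduct (star x) (M *ᵥ x)
      map_add' := fun M N => by
        simp [Matrix.add_mulVec, dotProduct_add]
      map_smul' := fun r M => by
        simp [Matrix.smul_mulVec, dotProduct_smul] }

lemma integral_isHermitian {Ω : Type*} [MeasurableSpace Ω] {μ : Measure Ω}
    {d : ℕ} {f : Ω → Matrix (Fin d) (Fin d) ℝ} (hf : Integrable f μ)
    (h : ∀ᵐ ω ∂μ, (f ω).IsHermitian) : (∫ ω, f ω ∂μ).IsHermitian := by
  have h1 : (ctCLM d) (∫ ω, f ω ∂μ) = ∫ ω, (ctCLM d) (f ω) ∂μ :=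
    ((ctCLM d).integral_comp_comm hf).symm
  have h2 : (∫ ω, (ctCLM d) (f ω) ∂μ) = ∫ ω, f ω ∂μ :=
    integral_congr_ae (h.mono fun ω hω => hω)
  exact h1.trans h2

lemma integral_posSemidef {Ω : Type*} [MeasurableSpace Ω] {μ : Measure Ω}
    {d : ℕ} {f : Ω → Matrix (Fin d) (Fin d) ℝ} (hf : Integrable f μ)
    (h : ∀ᵐ ω ∂μ, (f ω).PosSemidef) : (∫ ω, f ω ∂μ).PosSemidef := by
  rw [Matrix.posSemidef_iff_dotProduct_mulVec]
  constructor
  · exact integral_isHermitian hf (h.mono fun ω hω => hω.1)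
  · intro x
    have h1 : (quadCLM x) (∫ ω, f ω ∂μ) = ∫ ω, (quadCLM x) (f ω) ∂μ :=
      ((quadCLM x).integral_comp_comm hf).symm
    have h2 : 0 ≤ ∫ ω, (quadCLM x) (f ω) ∂μ :=
      integral_nonneg_of_ae (h.mono fun ω hω => hω.dotProduct_mulVec_nonneg x)
    calc (0:ℝ) ≤ ∫ ω, (quadCLM x) (f ω) ∂μ := h2
      _ = (quadCLM x) (∫ ω, f ω ∂μ) := h1.symm
      _ = dotProduct (star x) ((∫ ω, f ω ∂μ) *ᵥ x) := rfl

lemma psd_add' {d : ℕ} {A B : Matrix (Fin d) (Fin d) ℝ}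
    (hA : A.PosSemidef) (hB : B.PosSemidef) : (A + B).PosSemidef :=
  Matrix.PosSemidef.add hA hB

/-- Matrix MGF bound: if `X` is a random symmetric matrix with `E X = 0` and
`‖X‖ ≤ c` a.s. (operator norm), then for every `θ ∈ ℝ`,
`E exp(θX) ⪯ exp(ψ(|θ|)·E X²)` in the Loewner order, where
`ψ(θ) = (e^{θc} − θc − 1)/c²`. -/
theorem matrix_mgf_bound {d : ℕ} {Ω : Type*} [MeasurableSpace Ω]
    (μ : Measure Ω) [IsProbabilityMeasure μ]
    (X : Ω → Matrix (Fin d) (Fin d) ℝ) (hmeas : AEStronglyMeasurable X μ)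
    (c : ℝ) (hc : 0 < c)
    (hsa : ∀ ω, (X ω).IsHermitian)
    (hmean : (∫ ω, X ω ∂μ) = 0)
    (hbd : ∀ᵐ ω ∂μ, ‖X ω‖ ≤ c) :
    ∀ θ : ℝ,
      (NormedSpace.exp
          (((Real.exp (|θ| * c) - |θ| * c - 1) / c ^ 2) • ∫ ω, (X ω) ^ 2 ∂μ)
        - ∫ ω, NormedSpace.exp (θ • X ω) ∂μ).PosSemidef := by
  intro θ
  set ψ : ℝ := (Real.exp (|θ| * c) - |θ| * c - 1) / c ^ 2 with hψdef
  set S : Matrix (Fin d) (Fin d) ℝ := ∫ ω, (X ω) ^ 2 ∂μ with hSdef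
  set E : Matrix (Fin d) (Fin d) ℝ := ∫ ω, NormedSpace.exp (θ • X ω) ∂μ with hEdef
  -- integrability
  have hX : Integrable X μ := ⟨hmeas, HasFiniteIntegral.of_bounded hbd⟩
  have hmeas2 : AEStronglyMeasurable (fun ω => (X ω) ^ 2) μ :=
    (hmeas.mul hmeas).congr (Filter.Eventually.of_forall fun ω => (pow_two (X ω)).symm)
  have hX2 : Integrable (fun ω => (X ω) ^ 2) μ := by
    refine ⟨hmeas2, HasFiniteIntegral.of_bounded (C := c ^ 2) (hbd.mono fun ω hω => ?_)⟩
    calc ‖(X ω) ^ 2‖ = ‖X ω * X ω‖ := by rw [pow_two]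
      _ ≤ ‖X ω‖ * ‖X ω‖ := norm_mul_le _ _
      _ ≤ c * c := mul_le_mul hω hω (norm_nonneg _) hc.le
      _ = c ^ 2 := (pow_two c).symm
  have hmease : AEStronglyMeasurable (fun ω => NormedSpace.exp (θ • X ω)) μ :=
    (continuous_iff_continuousAt.2 fun x =>
      (NormedSpace.exp_analytic (𝕂 := ℝ) x).continuousAt).comp_aestronglyMeasurable (hmeas.const_smul θ)
  have hXe : Integrable (fun ω => NormedSpace.exp (θ • X ω)) μ := by
    refine ⟨hmease, HasFiniteIntegral.of_bounded (C := Real.exp (|θ| * c))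
      (hbd.mono fun ω hω => ?_)⟩
    refine (norm_exp_le_matrix _).trans (Real.exp_le_exp.mpr ?_)
    calc ‖θ • X ω‖ = |θ| * ‖X ω‖ := by rw [norm_smul, Real.norm_eq_abs]
      _ ≤ |θ| * c := mul_le_mul_of_nonneg_left hω (abs_nonneg θ)
  -- a.e. pointwise PSD bound
  have haePSD : ∀ᵐ ω ∂μ, ((1 : Matrix (Fin d) (Fin d) ℝ) + θ • X ω + ψ • (X ω) ^ 2
      - NormedSpace.exp (θ • X ω)).PosSemidef := by
    refine hbd.mono fun ω hω => key_psd (hsa ω) θ ψ fun i => ?_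
    exact scalar_key hc θ _ ((eig_abs_le (hsa ω) i).trans hω)
  have h_tX : Integrable (fun ω => θ • X ω) μ := hX.smul θ
  have h_pX2 : Integrable (fun ω => ψ • (X ω) ^ 2) μ := hX2.smul ψ
  have hi01 : Integrable (fun ω => (1 : Matrix (Fin d) (Fin d) ℝ) + θ • X ω) μ :=
    (integrable_const _).add h_tX
  have hi012 : Integrable (fun ω => (1 : Matrix (Fin d) (Fin d) ℝ) + θ • X ω + ψ • (X ω) ^ 2) μ :=
    hi01.add h_pX2
  have hint : Integrable (fun ω => (1 : Matrix (Fin d) (Fin d) ℝ) + θ • X ω + ψ • (X ω) ^ 2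
      - NormedSpace.exp (θ • X ω)) μ :=
    hi012.sub hXe
  have hcalc : (∫ ω, ((1 : Matrix (Fin d) (Fin d) ℝ) + θ • X ω + ψ • (X ω) ^ 2
      - NormedSpace.exp (θ • X ω)) ∂μ) = 1 + ψ • S - E := by
    rw [integral_sub hi012 hXe, integral_add hi01 h_pX2,
      integral_add (integrable_const _) h_tX]
    have h1 : (∫ _ω, (1 : Matrix (Fin d) (Fin d) ℝ) ∂μ) = 1 := by
      simp [integral_const, measure_univ]
    have h2 : (∫ ω, θ • X ω ∂μ) = 0 := by
      rw [integral_smul, hmean, smul_zero]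
    have h3 : (∫ ω, ψ • (X ω) ^ 2 ∂μ) = ψ • S := by
      rw [integral_smul]
    rw [h1, h2, h3, add_zero]
  have hSherm : S.IsHermitian :=
    integral_isHermitian hX2 (Filter.Eventually.of_forall fun ω => (hsa ω).pow 2)
  have key1 : ((1 : Matrix (Fin d) (Fin d) ℝ) + ψ • S - E).PosSemidef :=
    hcalc ▸ integral_posSemidef hint haePSD
  have key2 : (NormedSpace.exp (ψ • S) - 1 - ψ • S).PosSemidef := exp_lower_psd hSherm ψ
  have e : NormedSpace.exp (ψ • S) - E =
      (NormedSpace.exp (ψ • S) - 1 - ψ • S) + (1 + ψ • S - E) := by abel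
  rw [e]
  exact psd_add' key2 key1
end

section
/- For a positive semi-definite self-adjoint operator V with finite trace and any s ≥ 0, tr(exp(sV) − I) ≤ exp(s·tr(V)) − 1. -/
open Matrix

lemma sum_exp_sub_one_le {ι : Type*} (t : Finset ι) (f : ι → ℝ)
    (hf : ∀ i ∈ t, 0 ≤ f i) :
    ∑ i ∈ t, (Real.exp (f i) - 1) ≤ Real.exp (∑ i ∈ t, f i) - 1 := by
  induction t using Finset.cons_induction with
  | empty => simp
  | cons a t ha ih =>
    rw [Finset.sum_cons, Finset.sum_cons, Real.exp_add]
    have h1 : 1 ≤ Real.exp (f a) := Real.one_le_exp (hf a (Finset.mem_cons_self a t))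
    have h2 : 1 ≤ Real.exp (∑ i ∈ t, f i) :=
      Real.one_le_exp (Finset.sum_nonneg fun i hi => hf i (Finset.mem_cons_of_mem hi))
    have ih' := ih fun i hi => hf i (Finset.mem_cons_of_mem hi)
    nlinarith

/-- For a positive semi-definite matrix `V` and `s ≥ 0`,
`tr(exp(sV) − I) ≤ exp(s·tr V) − 1`. -/
theorem trace_exp_sub_one_le {n : Type*} [Fintype n] [DecidableEq n]
    (V : Matrix n n ℝ) (hV : V.PosSemidef) (s : ℝ) (hs : 0 ≤ s) :
    ((NormedSpace.exp (s • V) - 1).trace : ℝ)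
      ≤ Real.exp (s * (V.trace : ℝ)) - 1 := by
  have hA : (s • V).PosSemidef := by
    refine ⟨?_, fun x => ?_⟩
    · unfold Matrix.IsHermitian
      rw [conjTranspose_smul, hV.1]
      simp
    · have := hV.2 x
      exact (hV.smul hs).2 x
  set A : Matrix n n ℝ := s • V with hAdef
  have hH : A.IsHermitian := hA.1
  set U : Matrix n n ℝ := (hH.eigenvectorUnitary : Matrix n n ℝ) with hUdef
  have hU1 : star U * U = 1 := Matrix.mem_unitaryGroup_iff'.mp hH.eigenvectorUnitary.2
  have hU2 : U * star U = 1 := Matrix.mem_unitaryGroup_iff.mp hH.eigenvectorUnitary.2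
  have hUinv : U⁻¹ = star U := Matrix.inv_eq_left_inv hU1
  have hUunit : IsUnit U := ⟨⟨U, star U, hU2, hU1⟩, rfl⟩
  have hdiag : (RCLike.ofReal ∘ hH.eigenvalues : n → ℝ) = hH.eigenvalues := by
    funext i; simp [RCLike.ofReal]
  have hspec : A = U * diagonal hH.eigenvalues * star U := by
    conv_lhs => rw [hH.spectral_theorem]
    rw [hdiag]
    rw [Unitary.conjStarAlgAut_apply]
  -- trace of A is the sum of eigenvalues
  have htraceA : A.trace = ∑ i, hH.eigenvalues i := by
    conv_lhs => rw [hspec]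
    rw [Matrix.trace_mul_cycle, hU1, one_mul, Matrix.trace_diagonal]
  -- exponential
  have hexp : NormedSpace.exp A
      = U * diagonal (fun i => Real.exp (hH.eigenvalues i)) * star U := by
    conv_lhs => rw [hspec, ← hUinv]
    rw [Matrix.exp_conj U (diagonal hH.eigenvalues) hUunit, Matrix.exp_diagonal, hUinv]
    congr 2
    funext i
    rw [Pi.exp_def]
    simp [Real.exp_eq_exp_ℝ]
  have htraceexp : (NormedSpace.exp A).trace = ∑ i, Real.exp (hH.eigenvalues i) := by
    rw [hexp, Matrix.trace_mul_cycle, hU1, one_mul, Matrix.trace_diagonal]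
  have hmulV : s * V.trace = ∑ i, hH.eigenvalues i := by
    rw [← htraceA, hAdef, Matrix.trace_smul, smul_eq_mul]
  rw [Matrix.trace_sub, htraceexp, hmulV, Matrix.trace_one]
  have hle := sum_exp_sub_one_le Finset.univ hH.eigenvalues
    (fun i _ => hA.eigenvalues_nonneg i)
  rw [Finset.sum_sub_distrib] at hle
  simpa using hle
end

section
/- For a positive semi-definite matrix V and s ≥ 0 with σ² ≥ ‖V‖, tr(exp(sV) − I) ≤ (exp(s·σ²) − 1)·tr(V)/σ². -/
open Matrix
open scoped Matrix.Norms.L2Operator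

private lemma exp_aux (s σ2 l : ℝ) (hs : 0 ≤ s) (hσ : 0 < σ2) (hl0 : 0 ≤ l) (hl : l ≤ σ2) :
    Real.exp (s * l) - 1 ≤ (Real.exp (s * σ2) - 1) * l / σ2 := by
  have ht0 : 0 ≤ l / σ2 := div_nonneg hl0 hσ.le
  have ht1 : l / σ2 ≤ 1 := (div_le_one hσ).2 hl
  have h := convexOn_exp.2 (Set.mem_univ 0) (Set.mem_univ (s * σ2))
    (by linarith : (0:ℝ) ≤ 1 - l / σ2) ht0 (by ring)
  have hsl : (1 - l / σ2) • (0:ℝ) + (l / σ2) • (s * σ2) = s * l := by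
    rw [smul_zero, zero_add, smul_eq_mul, mul_comm s σ2, ← mul_assoc, div_mul_cancel₀ l hσ.ne', mul_comm]
  rw [hsl] at h
  simp only [smul_eq_mul, Real.exp_zero, mul_one] at h
  have hout : (Real.exp (s * σ2) - 1) * l / σ2 = l / σ2 * Real.exp (s * σ2) - l / σ2 := by
    field_simp
  linarith

/-- For a positive semi-definite matrix `V ≠ 0`, `s ≥ 0` and `σ² ≥ ‖V‖ > 0`,
`tr(exp(sV) − I) ≤ (exp(s·σ²) − 1)·tr(V)/σ²`. -/
theorem trace_exp_sub_one_le_intrinsic {n : Type*} [Fintype n] [DecidableEq n]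
    (V : Matrix n n ℝ) (hV : V.PosSemidef) (hV0 : V ≠ 0) (s : ℝ) (hs : 0 ≤ s)
    (σ2 : ℝ) (hσ : ‖V‖ ≤ σ2) :
    ((NormedSpace.exp (s • V) - 1).trace : ℝ)
      ≤ (Real.exp (s * σ2) - 1) * (V.trace : ℝ) / σ2 := by
  have hH : V.IsHermitian := hV.1
  have hnormpos : 0 < ‖V‖ := norm_pos_iff.2 hV0
  have hσpos : 0 < σ2 := lt_of_lt_of_le hnormpos hσ
  haveI : Nonempty n := by
    by_contra h
    rw [not_nonempty_iff] at h
    exact hV0 (Subsingleton.elim _ _)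
  haveI : NormOneClass (Matrix n n ℝ) :=
    ⟨by rw [Matrix.cstar_norm_def, _root_.map_one, norm_one]⟩
  -- eigenvalue bounds
  have heig_le : ∀ i, hH.eigenvalues i ≤ σ2 := by
    intro i
    have h := spectrum.norm_le_norm_of_mem (hH.eigenvalues_mem_spectrum_real i)
    rw [Real.norm_eq_abs] at h
    exact ((le_abs_self _).trans h).trans hσ
  have heig0 : ∀ i, 0 ≤ hH.eigenvalues i := hV.eigenvalues_nonneg
  -- diagonalization
  set u : (Matrix n n ℝ)ˣ := Unitary.toUnits hH.eigenvectorUnitary with hu_def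
  have hu : (u : Matrix n n ℝ) = hH.eigenvectorUnitary := rfl
  have hu' : ((u⁻¹ : (Matrix n n ℝ)ˣ) : Matrix n n ℝ)
      = star (hH.eigenvectorUnitary : Matrix n n ℝ) := rfl
  have hV_eq : V = (u : Matrix n n ℝ) * diagonal (RCLike.ofReal ∘ hH.eigenvalues)
      * ((u⁻¹ : (Matrix n n ℝ)ˣ) : Matrix n n ℝ) := by
    rw [hu, hu']; exact hH.spectral_theorem
  have htraceV : V.trace = ∑ i, hH.eigenvalues i := by
    conv_lhs => rw [hV_eq]
    rw [trace_units_conj, trace_diagonal]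
    simp
  have hsV : s • V = (u : Matrix n n ℝ) * diagonal (fun i => s * hH.eigenvalues i)
      * ((u⁻¹ : (Matrix n n ℝ)ˣ) : Matrix n n ℝ) := by
    conv_lhs => rw [hV_eq]
    rw [← smul_mul_assoc, ← mul_smul_comm, ← diagonal_smul]
    congr 2 with i
  have htrexp : (NormedSpace.exp (s • V)).trace = ∑ i, Real.exp (s * hH.eigenvalues i) := by
    rw [hsV, Matrix.exp_units_conj, Matrix.exp_diagonal, trace_units_conj, trace_diagonal]
    congr 1
    funext i
    rw [Pi.exp_def, Real.exp_eq_exp_ℝ]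
  have htr1 : (1 : Matrix n n ℝ).trace = (Fintype.card n : ℝ) := by
    simp [trace_one]
  rw [trace_sub, htrexp, htr1, htraceV]
  have key : ∑ i, Real.exp (s * hH.eigenvalues i) - (Fintype.card n : ℝ)
      = ∑ i, (Real.exp (s * hH.eigenvalues i) - 1) := by
    rw [Finset.sum_sub_distrib]
    simp [Finset.card_univ]
  rw [key, Finset.mul_sum, Finset.sum_div]
  apply Finset.sum_le_sum
  intro i _
  exact exp_aux s σ2 (hH.eigenvalues i) hs hσpos (heig0 i) (heig_le i)
end

section
/- Let f(x) = (T/x)·exp(−(x/c²)·h(cr/x)) for x > 0, where h(u) = (1+u)log(1+u) − u, and T, c, r > 0. Then d/dx log f(x) = (1/x)·[(r/c)(1 − log(1+u)/u) − 1] with u = cr/x; in particular, if r > c then f is strictly increasing on some interval (0, U), and if r < c then f is strictly decreasing on some interval (0, U). -/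
open Real Set

lemma log_ratio_small {u ε : ℝ} (hu : 0 < u) (hε : 0 < ε) (h : 4 / ε ^ 2 < u) :
    Real.log (1 + u) / u < ε := by
  have hsu : 0 < Real.sqrt u := Real.sqrt_pos.mpr hu
  have h1 : Real.log (1 + u) ≤ 2 * Real.sqrt u := by
    have h2 : Real.log (1 + u) = 2 * Real.log (Real.sqrt (1 + u)) := by
      rw [Real.log_sqrt (by linarith)]; ring
    have h3 : Real.log (Real.sqrt (1 + u)) ≤ Real.sqrt (1 + u) - 1 :=
      Real.log_le_sub_one_of_pos (Real.sqrt_pos.mpr (by linarith))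
    have h4 : Real.sqrt (1 + u) ≤ 1 + Real.sqrt u := by
      rw [show (1:ℝ) + Real.sqrt u = Real.sqrt ((1 + Real.sqrt u) ^ 2) from
        (Real.sqrt_sq (by positivity)).symm]
      apply Real.sqrt_le_sqrt
      nlinarith [Real.sq_sqrt hu.le, Real.sqrt_nonneg u]
    linarith
  have h5 : Real.sqrt (4 / ε ^ 2) < Real.sqrt u := Real.sqrt_lt_sqrt (by positivity) h
  have h6 : Real.sqrt (4 / ε ^ 2) = 2 / ε := by
    rw [show (4:ℝ) / ε ^ 2 = (2 / ε) ^ 2 by ring, Real.sqrt_sq (by positivity)]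
  have h7 : 2 / ε < Real.sqrt u := by rwa [h6] at h5
  have h9 : 2 < ε * Real.sqrt u := by
    rw [div_lt_iff₀ hε] at h7; linarith
  have h8 : 2 * Real.sqrt u < ε * u := by
    nlinarith [Real.sq_sqrt hu.le, hsu]
  rw [div_lt_iff₀ hu]; linarith

/-- Non-monotonicity of the intrinsic-dimension Bennett bound in `σ² = x`. For
`f(x) = (T/x)·exp(−(x/c²)·h(cr/x))` with `h(u) = (1+u)log(1+u) − u` and
`T, c, r > 0`: the derivative of `log ∘ f` at `x > 0` equals
`(1/x)·[(r/c)(1 − log(1+u)/u) − 1]` with `u = cr/x`; if `r > c` then `f` is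
strictly increasing on some interval `(0, U)` with `U > 0`, and if `r < c`
then `f` is strictly decreasing on some such interval. -/
theorem bennett_bound_not_monotone (T c r : ℝ) (hT : 0 < T) (hc : 0 < c)
    (hr : 0 < r)
    (f : ℝ → ℝ)
    (hf : ∀ x : ℝ, f x =
      T / x * Real.exp (-(x / c ^ 2) *
        ((1 + c * r / x) * Real.log (1 + c * r / x) - c * r / x))) :
    (∀ x : ℝ, 0 < x →
      HasDerivAt (fun y => Real.log (f y))
        ((1 / x) *
          (r / c * (1 - Real.log (1 + c * r / x) / (c * r / x)) - 1)) x) ∧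
    (c < r → ∃ U : ℝ, 0 < U ∧ StrictMonoOn f (Ioo 0 U)) ∧
    (r < c → ∃ U : ℝ, 0 < U ∧ StrictAntiOn f (Ioo 0 U)) := by
  have hderiv : ∀ x : ℝ, 0 < x →
      HasDerivAt (fun y => Real.log (f y))
        ((1 / x) *
          (r / c * (1 - Real.log (1 + c * r / x) / (c * r / x)) - 1)) x := by
    intro x hx
    have hx0 : x ≠ 0 := hx.ne'
    have hpos : 0 < 1 + c * r / x := by positivity
    have hu : HasDerivAt (fun y => c * r / y) (c * r * (-(x ^ 2)⁻¹)) x := by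
      simpa [div_eq_mul_inv] using (hasDerivAt_inv hx0).const_mul (c * r)
    have hw : HasDerivAt (fun y => 1 + c * r / y) (c * r * (-(x ^ 2)⁻¹)) x :=
      hu.const_add 1
    have hL : HasDerivAt (fun y => Real.log (1 + c * r / y))
        ((c * r * (-(x ^ 2)⁻¹)) / (1 + c * r / x)) x := hw.log hpos.ne'
    have hprod := hw.mul hL
    have hh := hprod.sub hu
    have ha : HasDerivAt (fun y => -(y / c ^ 2)) (-(1 / c ^ 2)) x := by
      exact ((hasDerivAt_id x).div_const (c ^ 2)).neg
    have hE := ha.mul hh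
    have hG := ((hasDerivAt_const x (Real.log T)).sub (Real.hasDerivAt_log hx0)).add hE
    have heq : (fun y => Real.log (f y)) =ᶠ[nhds x]
        (fun y => Real.log T - Real.log y +
          (-(y / c ^ 2) * ((1 + c * r / y) * Real.log (1 + c * r / y) - c * r / y))) := by
      filter_upwards [Ioi_mem_nhds hx] with y hy
      have hy' : (0:ℝ) < y := hy
      rw [hf y, Real.log_mul (by positivity) (Real.exp_ne_zero _), Real.log_exp,
        Real.log_div hT.ne' hy'.ne']
    have := hG.congr_of_eventuallyEq heq
    refine this.congr_deriv ?_
    simp only [Pi.sub_apply, Pi.mul_apply]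
    field_simp
    ring
  have hfpos : ∀ y : ℝ, 0 < y → 0 < f y := by
    intro y hy
    rw [hf y]
    positivity
  refine ⟨hderiv, ?_, ?_⟩
  · intro hcr
    have hε : 0 < (r - c) / r := div_pos (by linarith) hr
    set ε := (r - c) / r with hεdef
    refine ⟨c * r / (4 / ε ^ 2), by positivity, ?_⟩
    set U := c * r / (4 / ε ^ 2) with hU
    have hU0 : 0 < U := by positivity
    have hlog : StrictMonoOn (fun y => Real.log (f y)) (Ioo 0 U) := by
      apply strictMonoOn_of_deriv_pos (convex_Ioo 0 U)
      · exact fun y hy => ((hderiv y hy.1).differentiableAt.continuousAt).continuousWithinAt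
      · rw [interior_Ioo]
        intro y hy
        rw [(hderiv y hy.1).deriv]
        have hy0 : 0 < y := hy.1
        have hu0 : 0 < c * r / y := by positivity
        have hugt : 4 / ε ^ 2 < c * r / y := by
          rw [hU] at hy
          calc 4 / ε ^ 2 = c * r / U := by rw [hU]; field_simp
          _ < c * r / y := by
            apply div_lt_div_of_pos_left (by positivity) hy0 hy.2
        have hsmall : Real.log (1 + c * r / y) / (c * r / y) < ε :=
          log_ratio_small hu0 hε hugt
        apply mul_pos (by positivity)
        have h1 : c / r < 1 - Real.log (1 + c * r / y) / (c * r / y) := by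
          have : c / r = 1 - ε := by rw [hεdef]; field_simp; ring
          linarith
        have hrc : 0 < r / c := by positivity
        have : r / c * (c / r) < r / c * (1 - Real.log (1 + c * r / y) / (c * r / y)) :=
          (mul_lt_mul_iff_right₀ hrc).mpr h1
        have h2 : r / c * (c / r) = 1 := by field_simp
        linarith
    intro a ha b hb hab
    have := hlog ha hb hab
    have hfa := hfpos a ha.1
    have hfb := hfpos b hb.1
    calc f a = Real.exp (Real.log (f a)) := (Real.exp_log hfa).symm
    _ < Real.exp (Real.log (f b)) := Real.exp_lt_exp.mpr this
    _ = f b := Real.exp_log hfb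
  · intro hrc
    refine ⟨1, one_pos, ?_⟩
    have hlog : StrictAntiOn (fun y => Real.log (f y)) (Ioo 0 1) := by
      apply strictAntiOn_of_deriv_neg (convex_Ioo 0 1)
      · exact fun y hy => ((hderiv y hy.1).differentiableAt.continuousAt).continuousWithinAt
      · rw [interior_Ioo]
        intro y hy
        rw [(hderiv y hy.1).deriv]
        have hy0 : 0 < y := hy.1
        have hu0 : 0 < c * r / y := by positivity
        have hLpos : 0 < Real.log (1 + c * r / y) := Real.log_pos (by linarith)
        have hratio : 0 < Real.log (1 + c * r / y) / (c * r / y) := by positivity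
        apply mul_neg_of_pos_of_neg (by positivity)
        have h1 : r / c < 1 := (div_lt_one hc).mpr hrc
        have h2 : 1 - Real.log (1 + c * r / y) / (c * r / y) < 1 := by linarith
        have hrc0 : 0 < r / c := by positivity
        nlinarith
    intro a ha b hb hab
    have := hlog ha hb hab
    have hfa := hfpos a ha.1
    have hfb := hfpos b hb.1
    calc f b = Real.exp (Real.log (f b)) := (Real.exp_log hfb).symm
    _ < Real.exp (Real.log (f a)) := Real.exp_lt_exp.mpr this
    _ = f a := Real.exp_log hfa
end
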